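/- arXiv:2207.07548 — 7 statements merged into one kernel-verified Lean document; each statement's English description precedes it below -/
import Mathlib

section
/- Let q̂ > 0, let 0 ≤ α̂ < 1, and let β̂ and δ̂ be nonnegative real numbers with α̂ + β̂ ≤ 1 and β̂ + δ̂ < 1. Then there exists a positive constant C, independent of t, such that for all t ∈ (0, ∞), ∫₀ᵗ e^(−q̂(t−τ)) · (t−τ)^(−α̂) · t^δ̂ · τ^(−(β̂+δ̂)) dτ < C. -/
set_option maxHeartbeats 1000000


open MeasureTheory

/-- For `q̂ > 0`, `0 ≤ α̂ < 1`, `β̂, δ̂ ≥ 0` with `α̂ + β̂ ≤ 1` and `β̂ + δ̂ < 1`,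
there is a constant `C > 0`, independent of `t`, with
`∫₀ᵗ e^(−q̂(t−τ)) (t−τ)^(−α̂) t^δ̂ τ^(−(β̂+δ̂)) dτ < C` for all `t ∈ (0, ∞)`. -/
theorem stmt1 (q α β δ : ℝ) (hq : 0 < q) (hα0 : 0 ≤ α) (hα1 : α < 1)
    (hβ : 0 ≤ β) (hδ : 0 ≤ δ) (hαβ : α + β ≤ 1) (hβδ : β + δ < 1) :
    ∃ C : ℝ, 0 < C ∧ ∀ t : ℝ, 0 < t →
      (∫ τ in Set.Ioo (0 : ℝ) t,
          Real.exp (-q * (t - τ)) * (t - τ) ^ (-α) * t ^ δ * τ ^ (-(β + δ))) < C := by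
  have hr0 : 0 ≤ β + δ := add_nonneg hβ hδ
  have h1r : 0 < 1 - (β + δ) := by linarith
  have h1α : 0 < 1 - α := by linarith
  -- value of ∫ x^(-s) on 0..t
  have hval : ∀ s t : ℝ, s < 1 → 0 < t →
      ∫ x in (0:ℝ)..t, x ^ (-s) = t ^ (1 - s) / (1 - s) := by
    intro s t hs ht
    rw [integral_rpow (Or.inl (by linarith : (-1:ℝ) < -s)),
      show -s + 1 = 1 - s by ring, Real.zero_rpow (by linarith : (1:ℝ) - s ≠ 0), sub_zero]
  -- integrability of x^(-s)
  have hintg : ∀ s t : ℝ, s < 1 → 0 < t →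
      IntegrableOn (fun x : ℝ => x ^ (-s)) (Set.Ioo 0 t) := by
    intro s t hs ht
    have := intervalIntegral.intervalIntegrable_rpow'
      (show (-1:ℝ) < -s by linarith) (a := 0) (b := t)
    rwa [intervalIntegrable_iff_integrableOn_Ioo_of_le ht.le] at this
  -- the exp-rpow kernel
  set h : ℝ → ℝ := fun u => Real.exp (-q * u) * u ^ (-α) with hh
  have hmeas : Measurable h := by
    apply Measurable.mul
    · exact Real.measurable_exp.comp (measurable_id.const_mul (-q))
    · fun_prop
  have hnn : ∀ u : ℝ, 0 ≤ u → 0 ≤ h u := fun u hu =>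
    mul_nonneg (Real.exp_nonneg _) (Real.rpow_nonneg hu _)
  have hInt : ∀ t : ℝ, 0 < t → IntegrableOn h (Set.Ioo 0 t) := by
    intro t ht
    refine Integrable.mono (hintg α t hα1 ht) hmeas.aestronglyMeasurable.restrict ?_
    refine (ae_restrict_iff' measurableSet_Ioo).2 (Filter.Eventually.of_forall fun u hu => ?_)
    have hu0 : 0 < u := hu.1
    rw [Real.norm_eq_abs, Real.norm_eq_abs, abs_of_nonneg (Real.rpow_nonneg hu0.le _),
      abs_of_nonneg (hnn u hu0.le)]
    exact mul_le_of_le_one_left (Real.rpow_nonneg hu0.le _)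
      (Real.exp_le_one_iff.2 (by nlinarith))
  have hIntI : ∀ t : ℝ, 0 < t → IntervalIntegrable h volume 0 t := by
    intro t ht
    rw [intervalIntegrable_iff_integrableOn_Ioo_of_le ht.le]; exact hInt t ht
  -- small-time bound on J t = ∫ x in 0..t, h x
  have hJ_small : ∀ t : ℝ, 0 < t → ∫ x in (0:ℝ)..t, h x ≤ t ^ (1-α) / (1-α) := by
    intro t ht
    calc ∫ x in (0:ℝ)..t, h x ≤ ∫ x in (0:ℝ)..t, x ^ (-α) := by
          refine intervalIntegral.integral_mono_on ht.le (hIntI t ht)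
            (intervalIntegral.intervalIntegrable_rpow' (by linarith)) fun x hx => ?_
          exact mul_le_of_le_one_left (Real.rpow_nonneg hx.1 _)
            (Real.exp_le_one_iff.2 (by nlinarith [hx.1]))
      _ = t ^ (1-α) / (1-α) := hval α t hα1 ht
  have hJ_nonneg : ∀ t : ℝ, 0 < t → 0 ≤ ∫ x in (0:ℝ)..t, h x := by
    intro t ht
    exact intervalIntegral.integral_nonneg ht.le fun x hx => hnn x hx.1
  -- large-time bound
  have hJ_big : ∀ t : ℝ, 1 ≤ t → ∫ x in (0:ℝ)..t, h x ≤ 1/(1-α) + 1/q := by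
    intro t ht1
    have ht : (0:ℝ) < t := lt_of_lt_of_le one_pos ht1
    have hi01 : IntervalIntegrable h volume 0 1 := hIntI 1 one_pos
    have hi1t : IntervalIntegrable h volume 1 t := by
      refine (hIntI t ht).mono_set ?_
      rw [Set.uIcc_of_le ht1, Set.uIcc_of_le ht.le]
      exact Set.Icc_subset_Icc (by norm_num) le_rfl
    rw [← intervalIntegral.integral_add_adjacent_intervals hi01 hi1t]
    have h1 : ∫ x in (0:ℝ)..1, h x ≤ 1/(1-α) := by
      have := hJ_small 1 one_pos
      simpa using this
    have h2 : ∫ x in (1:ℝ)..t, h x ≤ 1/q := by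
      have hle : ∫ x in (1:ℝ)..t, h x ≤ ∫ x in (1:ℝ)..t, Real.exp (-q*x) := by
        refine intervalIntegral.integral_mono_on ht1 hi1t
          ((Real.continuous_exp.comp (continuous_const.mul continuous_id)).intervalIntegrable 1 t)
          fun x hx => ?_
        have hx1 : (1:ℝ) ≤ x := hx.1
        have hle1 : x ^ (-α) ≤ 1 :=
          Real.rpow_le_one_of_one_le_of_nonpos hx1 (by linarith)
        calc Real.exp (-q*x) * x^(-α) ≤ Real.exp (-q*x) * 1 :=
              mul_le_mul_of_nonneg_left hle1 (Real.exp_nonneg _)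
          _ = Real.exp (-q*x) := mul_one _
      have hcomp : ∫ x in (1:ℝ)..t, Real.exp (-q*x)
          = (Real.exp (-q*1) - Real.exp (-q*t))/q := by
        have hmr := intervalIntegral.integral_comp_mul_right (a := (1:ℝ)) (b := t)
          (fun x => Real.exp x) (neg_ne_zero.mpr hq.ne')
        simp only [smul_eq_mul, integral_exp] at hmr
        calc ∫ x in (1:ℝ)..t, Real.exp (-q*x)
            = ∫ x in (1:ℝ)..t, Real.exp (x * -q) := by
              simp only [mul_comm, mul_neg, neg_mul]
          _ = (-q)⁻¹ * (Real.exp (t * -q) - Real.exp (1 * -q)) := hmr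
          _ = (Real.exp (-q*1) - Real.exp (-q*t))/q := by
              rw [mul_comm t, mul_comm 1, div_eq_mul_inv, inv_neg]
              ring
      rw [hcomp] at hle
      have hexp1 : Real.exp (-q*1) ≤ 1 := Real.exp_le_one_iff.2 (by nlinarith)
      have hexp0 : 0 ≤ Real.exp (-q*t) := (Real.exp_pos _).le
      refine le_trans hle ?_
      rw [div_le_div_iff₀ hq hq]
      nlinarith
    linarith
  -- key exponential-power bound
  have hkey : ∀ t : ℝ, 0 < t → Real.exp (-(q*t/2)) * t^(1-α-β) ≤ 1 + 2/q := by
    intro t ht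
    have hp0 : (0:ℝ) ≤ 1-α-β := by linarith
    have hp1 : 1-α-β ≤ 1 := by linarith
    have htp : t^(1-α-β) ≤ 1 + t := by
      rcases le_total t 1 with hc|hc
      · have := Real.rpow_le_one ht.le hc hp0; linarith
      · have h2 := Real.rpow_le_rpow_of_exponent_le hc hp1
        rw [Real.rpow_one] at h2; linarith
    have hexp1 : Real.exp (-(q*t/2)) ≤ 1 := Real.exp_le_one_iff.2 (by nlinarith)
    have hexp2 : t * Real.exp (-(q*t/2)) ≤ 2/q := by
      have hge := Real.add_one_le_exp (q*t/2)
      have hepos := Real.exp_pos (q*t/2)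
      rw [Real.exp_neg, ← div_eq_mul_inv, div_le_div_iff₀ hepos hq]
      nlinarith
    have he0 : 0 ≤ Real.exp (-(q*t/2)) := (Real.exp_pos _).le
    nlinarith [Real.rpow_nonneg ht.le (1-α-β)]
  -- the constant
  have h2α : (0:ℝ) < (2:ℝ)^α := Real.rpow_pos_of_pos two_pos α
  have h2s : (0:ℝ) < (2:ℝ)^(β+δ) := Real.rpow_pos_of_pos two_pos (β+δ)
  refine ⟨(2:ℝ)^α/(1-(β+δ)) * (1 + 2/q) + (2:ℝ)^(β+δ) * (1/(1-α) + 1/q) + 1, by positivity,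
    fun t ht => ?_⟩
  set C1 : ℝ := (2:ℝ)^α/(1-(β+δ)) * (1 + 2/q) with hC1
  set C2 : ℝ := (2:ℝ)^(β+δ) * (1/(1-α) + 1/q) with hC2
  have ht2 : (0:ℝ) < t/2 := by linarith
  set K1 : ℝ := Real.exp (-(q*t/2)) * (t/2)^(-α) * t^δ with hK1
  have hK1nn : 0 ≤ K1 := by positivity
  set g1 : ℝ → ℝ := fun τ => K1 * τ^(-(β+δ)) with hg1
  set g2 : ℝ → ℝ := fun τ => (2:ℝ)^(β+δ) * t^(-β) * h (t - τ) with hg2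
  -- integrability of g1, g2 on Ioo 0 t
  have hig1 : IntegrableOn g1 (Set.Ioo 0 t) := (hintg (β+δ) t hβδ ht).const_mul K1
  have hig2 : IntegrableOn g2 (Set.Ioo 0 t) := by
    have := ((hIntI t ht).comp_sub_left t)
    simp only [sub_zero, sub_self] at this
    replace this := this.symm
    rw [intervalIntegrable_iff_integrableOn_Ioo_of_le ht.le] at this
    exact this.const_mul _
  -- pointwise bound
  have hpt : ∀ τ ∈ Set.Ioo (0:ℝ) t,
      Real.exp (-q * (t - τ)) * (t - τ) ^ (-α) * t ^ δ * τ ^ (-(β + δ)) ≤ g1 τ + g2 τ := by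
    intro τ hτ
    obtain ⟨hτ0, hτt⟩ := hτ
    have httτ : 0 < t - τ := by linarith
    have hg1nn : 0 ≤ g1 τ := mul_nonneg hK1nn (Real.rpow_nonneg hτ0.le _)
    have hg2nn : 0 ≤ g2 τ := by
      refine mul_nonneg (mul_nonneg h2s.le (Real.rpow_nonneg ht.le _)) (hnn _ httτ.le)
    rcases le_total τ (t/2) with hc|hc
    · -- bound by g1
      have hb : Real.exp (-q * (t - τ)) * (t - τ) ^ (-α) * t ^ δ * τ ^ (-(β + δ)) ≤ g1 τ := by
        have he : Real.exp (-q * (t - τ)) ≤ Real.exp (-(q*t/2)) :=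
          Real.exp_le_exp.2 (by nlinarith)
        have hp : (t - τ) ^ (-α) ≤ (t/2) ^ (-α) :=
          Real.rpow_le_rpow_of_nonpos ht2 (by linarith) (by linarith)
        have h1 : Real.exp (-q * (t - τ)) * (t - τ) ^ (-α)
            ≤ Real.exp (-(q*t/2)) * (t/2) ^ (-α) := by
          apply mul_le_mul he hp (Real.rpow_nonneg httτ.le _) (Real.exp_nonneg _)
        calc Real.exp (-q * (t - τ)) * (t - τ) ^ (-α) * t ^ δ * τ ^ (-(β + δ))
            ≤ Real.exp (-(q*t/2)) * (t/2) ^ (-α) * t ^ δ * τ ^ (-(β + δ)) := by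
              apply mul_le_mul_of_nonneg_right _ (Real.rpow_nonneg hτ0.le _)
              exact mul_le_mul_of_nonneg_right h1 (Real.rpow_nonneg ht.le _)
          _ = g1 τ := rfl
      linarith
    · -- bound by g2
      have hb : Real.exp (-q * (t - τ)) * (t - τ) ^ (-α) * t ^ δ * τ ^ (-(β + δ)) ≤ g2 τ := by
        have hp : τ ^ (-(β+δ)) ≤ (t/2) ^ (-(β+δ)) :=
          Real.rpow_le_rpow_of_nonpos ht2 hc (by linarith)
        have hts : (t/2) ^ (-(β+δ)) = (2:ℝ)^(β+δ) * t^(-(β+δ)) := by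
          rw [Real.div_rpow ht.le (by norm_num : (0:ℝ) ≤ 2), Real.rpow_neg ht.le,
            Real.rpow_neg (by norm_num : (0:ℝ) ≤ 2)]
          field_simp
        have hmul : t ^ δ * (t/2) ^ (-(β+δ)) = (2:ℝ)^(β+δ) * t^(-β) := by
          rw [hts, ← mul_assoc, mul_comm (t^δ), mul_assoc, ← Real.rpow_add ht]
          congr 1
          rw [show δ + -(β+δ) = -β by ring]
        have hhn : 0 ≤ h (t - τ) := hnn _ httτ.le
        calc Real.exp (-q * (t - τ)) * (t - τ) ^ (-α) * t ^ δ * τ ^ (-(β + δ))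
            = h (t - τ) * (t ^ δ * τ ^ (-(β + δ))) := by rw [hh]; ring
          _ ≤ h (t - τ) * (t ^ δ * (t/2) ^ (-(β+δ))) := by
              apply mul_le_mul_of_nonneg_left _ hhn
              exact mul_le_mul_of_nonneg_left hp (Real.rpow_nonneg ht.le _)
          _ = (2:ℝ)^(β+δ) * t^(-β) * h (t - τ) := by rw [hmul]; ring
          _ = g2 τ := rfl
      linarith
  -- monotonicity of integral
  have hfnn : ∀ τ ∈ Set.Ioo (0:ℝ) t,
      0 ≤ Real.exp (-q * (t - τ)) * (t - τ) ^ (-α) * t ^ δ * τ ^ (-(β + δ)) := by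
    intro τ hτ
    obtain ⟨hτ0, hτt⟩ := hτ
    have : (0:ℝ) < t - τ := by linarith
    positivity
  have hmono : (∫ τ in Set.Ioo (0 : ℝ) t,
      Real.exp (-q * (t - τ)) * (t - τ) ^ (-α) * t ^ δ * τ ^ (-(β + δ)))
      ≤ ∫ τ in Set.Ioo (0:ℝ) t, (g1 τ + g2 τ) := by
    refine integral_mono_of_nonneg ?_ (hig1.add hig2) ?_
    · exact (ae_restrict_iff' measurableSet_Ioo).2 (Filter.Eventually.of_forall hfnn)
    · exact (ae_restrict_iff' measurableSet_Ioo).2 (Filter.Eventually.of_forall hpt)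
  rw [integral_add hig1 hig2] at hmono
  -- value of ∫ g1
  have hg1val : ∫ τ in Set.Ioo (0:ℝ) t, g1 τ ≤ C1 := by
    have : ∫ τ in Set.Ioo (0:ℝ) t, g1 τ = K1 * (t ^ (1-(β+δ)) / (1-(β+δ))) := by
      rw [hg1]
      rw [MeasureTheory.integral_const_mul]
      congr 1
      rw [← integral_Ioc_eq_integral_Ioo, ← intervalIntegral.integral_of_le ht.le]
      exact hval (β+δ) t hβδ ht
    rw [this]
    have hKval : K1 * (t ^ (1-(β+δ)) / (1-(β+δ)))
        = (2:ℝ)^α/(1-(β+δ)) * (Real.exp (-(q*t/2)) * t^(1-α-β)) := by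
      rw [hK1]
      have hts : (t/2) ^ (-α) = (2:ℝ)^α * t^(-α) := by
        rw [Real.div_rpow ht.le (by norm_num : (0:ℝ) ≤ 2), Real.rpow_neg ht.le,
          Real.rpow_neg (by norm_num : (0:ℝ) ≤ 2)]
        field_simp
      rw [hts]
      have hexps : t^(-α) * t^δ * t^(1-(β+δ)) = t^(1-α-β) := by
        rw [← Real.rpow_add ht, ← Real.rpow_add ht]
        congr 1
        ring
      calc Real.exp (-(q*t/2)) * ((2:ℝ)^α * t^(-α)) * t^δ * (t^(1-(β+δ))/(1-(β+δ)))
          = (2:ℝ)^α/(1-(β+δ)) * (Real.exp (-(q*t/2)) * (t^(-α) * t^δ * t^(1-(β+δ)))) := by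
            ring
        _ = (2:ℝ)^α/(1-(β+δ)) * (Real.exp (-(q*t/2)) * t^(1-α-β)) := by rw [hexps]
    rw [hKval, hC1]
    have hpos : (0:ℝ) < (2:ℝ)^α/(1-(β+δ)) := by positivity
    exact mul_le_mul_of_nonneg_left (hkey t ht) hpos.le
  -- value of ∫ g2
  have hg2val : ∫ τ in Set.Ioo (0:ℝ) t, g2 τ ≤ C2 := by
    have hrefl : ∫ τ in Set.Ioo (0:ℝ) t, h (t - τ) = ∫ x in (0:ℝ)..t, h x := by
      rw [← integral_Ioc_eq_integral_Ioo, ← intervalIntegral.integral_of_le ht.le]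
      have := intervalIntegral.integral_comp_sub_left (a := (0:ℝ)) (b := t) h t
      simpa using this
    have hval2 : ∫ τ in Set.Ioo (0:ℝ) t, g2 τ
        = (2:ℝ)^(β+δ) * t^(-β) * ∫ x in (0:ℝ)..t, h x := by
      rw [hg2, MeasureTheory.integral_const_mul, hrefl]
    rw [hval2, hC2]
    have hJnn := hJ_nonneg t ht
    have htb : (0:ℝ) ≤ t^(-β) := Real.rpow_nonneg ht.le _
    have hbase : t^(-β) * ∫ x in (0:ℝ)..t, h x ≤ 1/(1-α) + 1/q := by
      rcases le_total t 1 with hc|hc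
      · have hJ := hJ_small t ht
        have h1 : t^(-β) * (t^(1-α)/(1-α)) = t^(-β+(1-α))/(1-α) := by
          rw [Real.rpow_add ht]; ring
        have h2 : t^(-β+(1-α)) ≤ 1 := Real.rpow_le_one ht.le hc (by linarith)
        have h3 : t^(-β) * ∫ x in (0:ℝ)..t, h x ≤ 1/(1-α) := by
          calc t^(-β) * ∫ x in (0:ℝ)..t, h x
              ≤ t^(-β) * (t^(1-α)/(1-α)) := mul_le_mul_of_nonneg_left hJ htb
            _ = t^(-β+(1-α))/(1-α) := h1
            _ ≤ 1/(1-α) := by gcongr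
        have : (0:ℝ) < 1/q := by positivity
        linarith
      · have hJ := hJ_big t hc
        have h2 : t^(-β) ≤ 1 := Real.rpow_le_one_of_one_le_of_nonpos hc (by linarith)
        calc t^(-β) * ∫ x in (0:ℝ)..t, h x
            ≤ 1 * (1/(1-α) + 1/q) := mul_le_mul h2 hJ hJnn zero_le_one
          _ = 1/(1-α) + 1/q := one_mul _
    calc (2:ℝ)^(β+δ) * t^(-β) * ∫ x in (0:ℝ)..t, h x
        = (2:ℝ)^(β+δ) * (t^(-β) * ∫ x in (0:ℝ)..t, h x) := by ring
      _ ≤ (2:ℝ)^(β+δ) * (1/(1-α) + 1/q) := mul_le_mul_of_nonneg_left hbase h2s.le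
  calc (∫ τ in Set.Ioo (0 : ℝ) t,
        Real.exp (-q * (t - τ)) * (t - τ) ^ (-α) * t ^ δ * τ ^ (-(β + δ)))
      ≤ (∫ τ in Set.Ioo (0:ℝ) t, g1 τ) + ∫ τ in Set.Ioo (0:ℝ) t, g2 τ := hmono
    _ ≤ C1 + C2 := add_le_add hg1val hg2val
    _ < C1 + C2 + 1 := by linarith
end

section
/- Let σ > 0. Then there exists a constant C > 0, independent of t (but which may depend on σ), such that for all t > 0: (i) Σ_{k∈ℤ} e^(−2t|k|^σ) ≤ 1 + C e^(−t) (1 + t^(−1/σ)), and (ii) Σ_{k∈ℤ, k≠0} e^(−2t|k|^σ) ≤ C e^(−t) (1 + t^(−1/σ)). -/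
open Real MeasureTheory Set


lemma my_integrableOn_exp_neg_mul_rpow {p b : ℝ} (hp : 0 < p) (hb : 0 < b) :
    IntegrableOn (fun x : ℝ => Real.exp (-b * x ^ p)) (Ioi 0) := by
  have h1 : IntegrableOn (fun x : ℝ => Real.exp (-x ^ p)) (Ioi 0) := by
    rw [← integrableOn_Ioi_comp_rpow_iff' (fun y : ℝ => Real.exp (-y ^ p))
      (p := 1 / p) (by positivity)]
    have hG := Real.GammaIntegral_convergent (s := 1 / p) (by positivity)
    refine hG.congr_fun (fun x hx => ?_) measurableSet_Ioi
    have hx0 : (0:ℝ) < x := hx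
    rw [← Real.rpow_mul hx0.le, one_div_mul_cancel hp.ne', Real.rpow_one]
    simp [mul_comm]
  have h2 := (integrableOn_Ioi_comp_mul_left_iff (fun y : ℝ => Real.exp (-y ^ p))
    0 (a := b ^ (1 / p)) (by positivity)).2 (by simpa using h1)
  refine h2.congr_fun (fun x hx => ?_) measurableSet_Ioi
  have hx0 : (0:ℝ) < x := hx
  dsimp only
  rw [Real.mul_rpow (by positivity) hx0.le, ← Real.rpow_mul hb.le,
    one_div_mul_cancel hp.ne', Real.rpow_one, neg_mul]

lemma my_sum_le_gamma {p b : ℝ} (hp : 0 < p) (hb : 0 < b) (N : ℕ) :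
    ∑ i ∈ Finset.range N, Real.exp (-b * ((i : ℝ) + 1) ^ p) ≤
      b ^ (-1 / p) * Real.Gamma (1 / p + 1) := by
  have hint := my_integrableOn_exp_neg_mul_rpow hp hb
  have hanti : AntitoneOn (fun x : ℝ => Real.exp (-b * x ^ p)) (Icc (0:ℝ) (0 + N)) := by
    intro x hx y hy hxy
    have h1 : x ^ p ≤ y ^ p := Real.rpow_le_rpow hx.1 hxy hp.le
    exact Real.exp_le_exp.2 (by nlinarith)
  have h1 := hanti.sum_le_integral
  have h2 : ∫ x in (0:ℝ)..(0 + N : ℝ), Real.exp (-b * x ^ p) ≤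
      ∫ x in Ioi (0:ℝ), Real.exp (-b * x ^ p) := by
    rw [intervalIntegral.integral_of_le (by positivity)]
    refine setIntegral_mono_set hint
      (Filter.Eventually.of_forall fun x => (Real.exp_pos _).le) ?_
    exact (Ioc_subset_Ioi_self (a := (0:ℝ) + N) (b := (0:ℝ))).eventuallyLE
  rw [integral_exp_neg_mul_rpow hp hb] at h2
  refine le_trans ?_ (h1.trans h2)
  apply le_of_eq
  apply Finset.sum_congr rfl
  intro i _
  push_cast
  norm_num

set_option maxHeartbeats 1000000 in
/-- For `σ > 0` there is `C > 0`, independent of `t`, such that for all `t > 0`: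
(i) `Σ_{k∈ℤ} e^(−2t|k|^σ) ≤ 1 + C e^(−t)(1 + t^(−1/σ))`, and
(ii) `Σ_{k∈ℤ, k≠0} e^(−2t|k|^σ) ≤ C e^(−t)(1 + t^(−1/σ))`. -/
theorem stmt3 (σ : ℝ) (hσ : 0 < σ) :
    ∃ C : ℝ, 0 < C ∧ ∀ t : ℝ, 0 < t →
      (∑' k : ℤ, Real.exp (-2 * t * (|k| : ℝ) ^ σ)) ≤
          1 + C * Real.exp (-t) * (1 + t ^ (-(1 / σ))) ∧
      (∑' k : {k : ℤ // k ≠ 0}, Real.exp (-2 * t * (|(k : ℤ)| : ℝ) ^ σ)) ≤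
          C * Real.exp (-t) * (1 + t ^ (-(1 / σ))) := by
  have hΓ : 0 < Real.Gamma (1 / σ + 1) := Real.Gamma_pos_of_pos (by positivity)
  refine ⟨2 * Real.Gamma (1 / σ + 1), by positivity, fun t ht => ?_⟩
  set Γ := Real.Gamma (1 / σ + 1) with hΓdef
  set g1 : ℕ → ℝ := fun n => Real.exp (-t * ((n : ℝ) + 1) ^ σ) with hg1def
  set g2 : ℕ → ℝ := fun n => Real.exp (-2 * t * ((n : ℝ) + 1) ^ σ) with hg2def
  have hg1sum : Summable g1 :=
    summable_of_sum_range_le (fun n => (Real.exp_pos _).le)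
      (fun N => my_sum_le_gamma hσ ht N)
  have hT1 : (∑' n, g1 n) ≤ t ^ (-1 / σ) * Γ :=
    Real.tsum_le_of_sum_range_le (fun n => (Real.exp_pos _).le)
      (fun N => my_sum_le_gamma hσ ht N)
  have hle : ∀ n : ℕ, g2 n ≤ Real.exp (-t) * g1 n := by
    intro n
    have ha : (1 : ℝ) ≤ ((n : ℝ) + 1) ^ σ :=
      Real.one_le_rpow (le_add_of_nonneg_left (Nat.cast_nonneg n)) hσ.le
    rw [hg1def, hg2def, ← Real.exp_add]
    exact Real.exp_le_exp.2 (by nlinarith)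
  have hg2sum : Summable g2 :=
    Summable.of_nonneg_of_le (fun n => (Real.exp_pos _).le) hle (hg1sum.mul_left _)
  have hT2 : (∑' n, g2 n) ≤ Real.exp (-t) * (t ^ (-1 / σ) * Γ) := by
    calc (∑' n, g2 n) ≤ ∑' n, Real.exp (-t) * g1 n :=
          Summable.tsum_le_tsum hle hg2sum (hg1sum.mul_left _)
      _ = Real.exp (-t) * ∑' n, g1 n := tsum_mul_left
      _ ≤ Real.exp (-t) * (t ^ (-1 / σ) * Γ) := by
          exact mul_le_mul_of_nonneg_left hT1 (Real.exp_pos _).le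
  set u : ℤ → ℝ := fun k => Real.exp (-2 * t * (|k| : ℝ) ^ σ) with hudef
  have hfshift : ∀ n : ℕ, u ((n : ℤ) + 1) = g2 n := by
    intro n
    simp only [hudef, hg2def]
    push_cast
    rw [abs_of_nonneg (by positivity)]
  have hfneg : ∀ n : ℕ, u (-((n : ℤ) + 1)) = g2 n := by
    intro n
    simp only [hudef, hg2def]
    push_cast
    rw [abs_neg, abs_of_nonneg (by positivity)]
  have hu0 : u 0 = 1 := by
    rw [hudef]
    norm_num [Real.zero_rpow hσ.ne']
  have hfnatsum : Summable (fun n : ℕ => u n) := by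
    rw [← summable_nat_add_iff 1]
    refine hg2sum.congr fun n => ?_
    rw [← hfshift n]; push_cast; ring_nf
  have hfnegsum : Summable (fun n : ℕ => u (-((n : ℤ) + 1))) :=
    hg2sum.congr fun n => (hfneg n).symm
  have husum : Summable u := Summable.of_nat_of_neg_add_one hfnatsum hfnegsum
  have hfnat_eq : (∑' n : ℕ, u n) = 1 + ∑' n, g2 n := by
    rw [Summable.tsum_eq_zero_add hfnatsum, show ((0:ℕ):ℤ) = 0 from rfl, hu0]
    congr 1
    refine tsum_congr fun n => ?_
    rw [← hfshift n]; push_cast; ring_nf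
  have htotal : (∑' k : ℤ, u k) = 1 + 2 * ∑' n, g2 n := by
    rw [tsum_of_nat_of_neg_add_one hfnatsum hfnegsum, hfnat_eq,
      tsum_congr hfneg]
    ring
  have hsubty : (∑' k : {k : ℤ // k ≠ 0}, u k) = 2 * ∑' n, g2 n := by
    have hkey := Summable.tsum_subtype_add_tsum_subtype_compl husum ({0} : Set ℤ)
    have h0 : (∑' k : ({0} : Set ℤ), u k) = 1 := by rw [tsum_singleton 0 u, hu0]
    have he : (∑' k : ↥(({0} : Set ℤ)ᶜ), u k) = ∑' k : {k : ℤ // k ≠ 0}, u k := by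
      have hiff : ∀ x : ℤ, x ∈ ({0} : Set ℤ)ᶜ ↔ x ≠ 0 := fun x => by simp
      exact Equiv.tsum_eq (Equiv.subtypeEquivRight hiff) (fun k : {k : ℤ // k ≠ 0} => u ↑k)
    rw [h0, he, htotal] at hkey
    linarith
  have hfin : 2 * (∑' n, g2 n) ≤
      2 * Γ * Real.exp (-t) * (1 + t ^ (-(1 / σ))) := by
    have hx : t ^ (-1 / σ) = t ^ (-(1 / σ)) := by rw [neg_div]
    have hxpos : (0:ℝ) ≤ t ^ (-(1 / σ)) := Real.rpow_nonneg ht.le _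
    have hepos : (0:ℝ) < Real.exp (-t) := Real.exp_pos _
    rw [hx] at hT2
    nlinarith [mul_pos hΓ hepos]
  constructor
  · rw [show (∑' k : ℤ, Real.exp (-2 * t * (|k| : ℝ) ^ σ)) = ∑' k : ℤ, u k from rfl, htotal]
    linarith
  · rw [show (∑' k : {k : ℤ // k ≠ 0}, Real.exp (-2 * t * (|(k : ℤ)| : ℝ) ^ σ))
        = ∑' k : {k : ℤ // k ≠ 0}, u k from rfl, hsubty]
    linarith
end

section
/- Let σ > 0 and s > 0. There exists a constant C > 0 independent of t such that for every f ∈ L¹(𝕊) and every t > 0, ‖e^(−tL) f‖_{Ḣ^s} ≤ C e^(−t/4) (1 + t^(−(2s+1)/(2σ))) ‖f‖_{L¹}. -/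
open MeasureTheory
open scoped ENNReal

noncomputable section

instance : Fact (0 < 2 * Real.pi) := ⟨by positivity⟩

/-- The Fourier multiplier symbol `e^(−s|k|^σ − i s ω_av sgn k)` of the semigroup `e^(−sL)`. -/
def heatMul (σ ωav s : ℝ) (k : ℤ) : ℂ :=
  Complex.exp (Complex.ofReal (-(s * (|k| : ℝ) ^ σ)) -
    Complex.I * Complex.ofReal (ωav * s * (Int.sign k : ℝ)))

/-- The homogeneous Sobolev norm `‖f‖_{Ḣ^s} = (Σ_{k∈ℤ} |k|^(2s) |f̂(k)|²)^(1/2)` of a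
function on the circle, valued in `ℝ≥0∞`. -/
def hSobNorm (s : ℝ) (f : AddCircle (2 * Real.pi) → ℂ) : ℝ≥0∞ :=
  (∑' k : ℤ, ENNReal.ofReal ((|k| : ℝ) ^ (2 * s) * ‖fourierCoeff f k‖ ^ 2)) ^ ((1 : ℝ) / 2)

section Stmt5Aux

open Real Filter Topology

lemma telescope_hasSum (K : ℕ) (hK : 1 ≤ K) :
    HasSum (fun n : ℕ => (((n : ℝ) + K) * ((n : ℝ) + K + 1))⁻¹) ((K : ℝ))⁻¹ := by
  have hK' : (1:ℝ) ≤ (K:ℝ) := by exact_mod_cast hK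
  have hpos : ∀ n : ℕ, (0:ℝ) < (n:ℝ) + K := fun n => by
    have : (0:ℝ) ≤ (n:ℝ) := Nat.cast_nonneg n
    linarith
  have heq : ∀ n : ℕ, (((n:ℝ) + K) * ((n:ℝ) + K + 1))⁻¹
      = ((n:ℝ) + K)⁻¹ - ((n:ℝ) + K + 1)⁻¹ := by
    intro n
    have h1 := hpos n
    have h2 : (0:ℝ) < (n:ℝ) + K + 1 := by linarith
    field_simp
    ring
  rw [hasSum_iff_tendsto_nat_of_nonneg (fun n => by
    exact inv_nonneg.mpr (le_of_lt (mul_pos (hpos n) (by have := hpos n; linarith))))]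
  have key : ∀ N, ∑ n ∈ Finset.range N, (((n:ℝ)+K)*((n:ℝ)+K+1))⁻¹
      = (K:ℝ)⁻¹ - ((N:ℝ)+K)⁻¹ := by
    intro N
    have h := Finset.sum_range_sub' (f := fun n : ℕ => ((n:ℝ) + K)⁻¹) N
    simp only [Nat.cast_zero, zero_add] at h
    rw [← h]
    refine Finset.sum_congr rfl fun n _ => ?_
    rw [heq n]
    push_cast
    ring_nf
  simp only [key]
  have h0 : Tendsto (fun N : ℕ => ((N:ℝ) + K)⁻¹) atTop (nhds 0) :=
    tendsto_inv_atTop_zero.comp (tendsto_atTop_add_const_right _ _ tendsto_natCast_atTop_atTop)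
  simpa using tendsto_const_nhds.sub h0

lemma exp_neg_le (N : ℕ) {y : ℝ} (hy : 0 < y) :
    Real.exp (-y) ≤ (Nat.factorial N : ℝ) / y ^ N := by
  have h1 : y ^ N / (Nat.factorial N : ℝ) ≤ Real.exp y := Real.pow_div_factorial_le_exp y hy.le N
  have h2 : (0:ℝ) < y ^ N / (Nat.factorial N : ℝ) := by positivity
  calc Real.exp (-y) = (Real.exp y)⁻¹ := Real.exp_neg y
    _ ≤ (y ^ N / (Nat.factorial N : ℝ))⁻¹ := inv_anti₀ h2 h1
    _ = (Nat.factorial N : ℝ) / y ^ N := inv_div _ _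

lemma natSum (σ p : ℝ) (hσ : 0 < σ) (hp : 0 < p) :
    ∃ C : ℝ, 0 < C ∧ ∀ t : ℝ, 0 < t →
      Summable (fun n : ℕ => (n:ℝ) ^ p * Real.exp (-(t * (n:ℝ) ^ σ))) ∧
      ∑' n : ℕ, (n:ℝ) ^ p * Real.exp (-(t * (n:ℝ) ^ σ))
        ≤ C * (1 + t ^ (-((p+1)/σ))) := by
  have hσ' : σ ≠ 0 := ne_of_gt hσ
  obtain ⟨N, hN⟩ : ∃ N : ℕ, p + 2 ≤ σ * N := by
    refine ⟨⌈(p+2)/σ⌉₊, ?_⟩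
    have h := Nat.le_ceil ((p+2)/σ)
    have := mul_le_mul_of_nonneg_left h hσ.le
    calc p + 2 = σ * ((p+2)/σ) := by field_simp
      _ ≤ σ * ⌈(p+2)/σ⌉₊ := this
  refine ⟨3 ^ (p+1) + (Nat.factorial N : ℝ), by positivity, fun t ht => ?_⟩
  set x : ℝ := t ^ (-(1/σ)) with hxdef
  have hx : 0 < x := Real.rpow_pos_of_pos ht _
  set K : ℕ := ⌈x⌉₊ with hKdef
  have hK0 : 0 < K := Nat.ceil_pos.mpr hx
  have hK1 : 1 ≤ K := hK0
  have hKR : (0:ℝ) < K := by exact_mod_cast hK0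
  have hKx : x ≤ K := Nat.le_ceil x
  have hKx2 : (K:ℝ) ≤ x + 1 := (Nat.ceil_lt_add_one hx.le).le
  set φ : ℕ → ℝ := fun n => (n:ℝ) ^ p * Real.exp (-(t * (n:ℝ) ^ σ)) with hφdef
  have φnonneg : ∀ n, 0 ≤ φ n := fun n => by positivity
  set c : ℝ := (Nat.factorial N : ℝ) * t ^ (-(N:ℝ)) * (K:ℝ) ^ (p + 2 - σ*N) with hcdef
  have hc : 0 ≤ c := by positivity
  have hexp_nonpos : p + 2 - σ * N ≤ 0 := by linarith
  -- tail pointwise bound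
  have htail : ∀ n : ℕ, φ (n + (K+1)) ≤ c * (((n:ℝ) + K) * ((n:ℝ) + K + 1))⁻¹ := by
    intro n
    set mR : ℝ := ((n + (K+1) : ℕ) : ℝ) with hmRdef
    have hmR : mR = (n:ℝ) + K + 1 := by push_cast [hmRdef]; ring
    have hmpos : (0:ℝ) < mR := by rw [hmR]; positivity
    have hKm : (K:ℝ) ≤ mR := by rw [hmR]; have : (0:ℝ) ≤ (n:ℝ) := Nat.cast_nonneg n; linarith
    have hy : 0 < t * mR ^ σ := mul_pos ht (Real.rpow_pos_of_pos hmpos σ)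
    have hpowEq : (mR ^ σ) ^ N = mR ^ (σ * (N:ℝ)) := by
      rw [← Real.rpow_natCast (mR ^ σ) N, ← Real.rpow_mul hmpos.le]
    have hA : Real.exp (-(t * mR ^ σ)) ≤ (Nat.factorial N : ℝ) / (t ^ N * mR ^ (σ * (N:ℝ))) := by
      have := exp_neg_le N hy
      rwa [mul_pow, hpowEq] at this
    have htN : (t:ℝ) ^ N ≠ 0 := by positivity
    have hmN : mR ^ (σ * (N:ℝ)) ≠ 0 := (Real.rpow_pos_of_pos hmpos _).ne'
    have e1 : mR ^ p * ((Nat.factorial N : ℝ) / (t ^ N * mR ^ (σ * (N:ℝ))))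
        = (Nat.factorial N : ℝ) * t ^ (-(N:ℝ)) * mR ^ (p - σ * N) := by
      rw [Real.rpow_sub hmpos, Real.rpow_neg ht.le, Real.rpow_natCast]
      field_simp
    have e2 : mR ^ (p - σ*N) = mR ^ (p + 2 - σ*N) * mR ^ (-(2:ℝ)) := by
      rw [← Real.rpow_add hmpos]; ring_nf
    have e3 : mR ^ (p + 2 - σ*N) ≤ (K:ℝ) ^ (p + 2 - σ*N) :=
      Real.rpow_le_rpow_of_nonpos hKR hKm hexp_nonpos
    have e4 : mR ^ (-(2:ℝ)) ≤ (((n:ℝ) + K) * ((n:ℝ) + K + 1))⁻¹ := by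
      have hprod : (0:ℝ) < ((n:ℝ) + K) * ((n:ℝ) + K + 1) := by positivity
      have hsq : ((n:ℝ) + K) * ((n:ℝ) + K + 1) ≤ mR ^ (2:ℕ) := by
        rw [hmR]; nlinarith [Nat.cast_nonneg (α := ℝ) n]
      have : mR ^ (-(2:ℝ)) = (mR ^ (2:ℕ))⁻¹ := by
        rw [Real.rpow_neg hmpos.le, show ((2:ℝ)) = ((2:ℕ):ℝ) by norm_num, Real.rpow_natCast]
      rw [this]
      exact inv_anti₀ hprod hsq
    calc φ (n + (K+1)) = mR ^ p * Real.exp (-(t * mR ^ σ)) := rfl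
      _ ≤ mR ^ p * ((Nat.factorial N : ℝ) / (t ^ N * mR ^ (σ * (N:ℝ)))) :=
          mul_le_mul_of_nonneg_left hA (Real.rpow_nonneg hmpos.le p)
      _ = (Nat.factorial N : ℝ) * t ^ (-(N:ℝ)) * (mR ^ (p + 2 - σ*N) * mR ^ (-(2:ℝ))) := by
          rw [e1, e2]
      _ ≤ (Nat.factorial N : ℝ) * t ^ (-(N:ℝ)) *
            ((K:ℝ) ^ (p + 2 - σ*N) * (((n:ℝ) + K) * ((n:ℝ) + K + 1))⁻¹) := by
          have h1 : (0:ℝ) ≤ (Nat.factorial N : ℝ) * t ^ (-(N:ℝ)) := by positivity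
          refine mul_le_mul_of_nonneg_left ?_ h1
          refine mul_le_mul e3 e4 ?_ ?_
          · positivity
          · positivity
      _ = c * (((n:ℝ) + K) * ((n:ℝ) + K + 1))⁻¹ := by rw [hcdef]; ring
  have htele := telescope_hasSum K hK1
  have htele_sum : Summable (fun n : ℕ => c * (((n:ℝ) + K) * ((n:ℝ) + K + 1))⁻¹) :=
    htele.summable.mul_left c
  have htail_sum : Summable (fun n : ℕ => φ (n + (K+1))) :=
    Summable.of_nonneg_of_le (fun n => φnonneg _) htail htele_sum
  have hφsum : Summable φ := (summable_nat_add_iff (K+1)).mp htail_sum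
  refine ⟨hφsum, ?_⟩
  -- tail bound
  have htailB : ∑' n, φ (n + (K+1)) ≤ (Nat.factorial N : ℝ) * t ^ (-((p+1)/σ)) := by
    have h1 : ∑' n, φ (n + (K+1)) ≤ c * (K:ℝ)⁻¹ := by
      have := Summable.tsum_le_tsum htail htail_sum htele_sum
      rwa [(htele.mul_left c).tsum_eq] at this
    refine h1.trans ?_
    have e5 : c * (K:ℝ)⁻¹ = (Nat.factorial N : ℝ) * t ^ (-(N:ℝ)) * (K:ℝ) ^ (p + 1 - σ*N) := by
      rw [hcdef, ← Real.rpow_neg_one (K:ℝ), mul_assoc, ← Real.rpow_add hKR]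
      ring_nf
    rw [e5]
    have e6 : (K:ℝ) ^ (p + 1 - σ*N) ≤ x ^ (p + 1 - σ*N) :=
      Real.rpow_le_rpow_of_nonpos hx hKx (by linarith)
    have e7 : x ^ (p + 1 - σ*N) = t ^ (-((p+1)/σ)) * t ^ ((N:ℝ)) := by
      rw [hxdef, ← Real.rpow_mul ht.le, ← Real.rpow_add ht]
      congr 1
      field_simp
      ring
    calc (Nat.factorial N : ℝ) * t ^ (-(N:ℝ)) * (K:ℝ) ^ (p + 1 - σ*N)
        ≤ (Nat.factorial N : ℝ) * t ^ (-(N:ℝ)) * (t ^ (-((p+1)/σ)) * t ^ ((N:ℝ))) := by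
          refine mul_le_mul_of_nonneg_left (e6.trans_eq e7) (by positivity)
      _ = (Nat.factorial N : ℝ) * t ^ (-((p+1)/σ)) * (t ^ (-(N:ℝ)) * t ^ ((N:ℝ))) := by ring
      _ = (Nat.factorial N : ℝ) * t ^ (-((p+1)/σ)) := by
          rw [← Real.rpow_add ht, neg_add_cancel, Real.rpow_zero, mul_one]
  -- head bound
  have hheadB : ∑ n ∈ Finset.range (K+1), φ n ≤ 3 ^ (p+1) * (1 + t ^ (-((p+1)/σ))) := by
    have hterm : ∀ n ∈ Finset.range (K+1), φ n ≤ (K:ℝ) ^ p := by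
      intro n hn
      have hnK : (n:ℝ) ≤ (K:ℝ) := by
        exact_mod_cast Nat.lt_succ_iff.mp (Finset.mem_range.mp hn)
      calc φ n ≤ (n:ℝ) ^ p * 1 := by
            refine mul_le_mul_of_nonneg_left ?_ (Real.rpow_nonneg (Nat.cast_nonneg n) p)
            rw [show (1:ℝ) = Real.exp 0 by simp]
            refine Real.exp_le_exp.mpr ?_
            have : (0:ℝ) ≤ t * (n:ℝ) ^ σ := by positivity
            linarith
        _ = (n:ℝ) ^ p := mul_one _
        _ ≤ (K:ℝ) ^ p := Real.rpow_le_rpow (Nat.cast_nonneg n) hnK hp.le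
    have h2 : ∑ n ∈ Finset.range (K+1), φ n ≤ ((K:ℝ)+1) * (K:ℝ) ^ p := by
      have := Finset.sum_le_card_nsmul (Finset.range (K+1)) φ ((K:ℝ) ^ p) hterm
      rw [Finset.card_range] at this
      calc ∑ n ∈ Finset.range (K+1), φ n ≤ (K+1) • ((K:ℝ) ^ p) := this
        _ = ((K:ℝ)+1) * (K:ℝ) ^ p := by rw [nsmul_eq_mul]; push_cast; ring
    refine h2.trans ?_
    have h3 : ((K:ℝ)+1) * (K:ℝ) ^ p ≤ (x+2) ^ (p+1) := by
      have hx2 : (0:ℝ) < x + 2 := by linarith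
      have hKx3 : (K:ℝ) ≤ x + 2 := by linarith
      calc ((K:ℝ)+1) * (K:ℝ) ^ p ≤ (x+2) * (x+2) ^ p := by
            refine mul_le_mul (by linarith) (Real.rpow_le_rpow hKR.le hKx3 hp.le) (by positivity)
              (by linarith)
        _ = (x+2) ^ (p+1) := by
            rw [Real.rpow_add_one hx2.ne']; ring
    refine h3.trans ?_
    have hτ : x ^ (p+1) = t ^ (-((p+1)/σ)) := by
      rw [hxdef, ← Real.rpow_mul ht.le]
      congr 1
      ring
    rw [← hτ]
    rcases le_or_gt x 1 with hx1 | hx1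
    · have : (x+2) ^ (p+1) ≤ 3 ^ (p+1) :=
        Real.rpow_le_rpow (by linarith) (by linarith) (by linarith)
      refine this.trans ?_
      have hxp : (0:ℝ) ≤ x ^ (p+1) := Real.rpow_nonneg hx.le _
      nlinarith [Real.rpow_pos_of_pos (show (0:ℝ) < 3 by norm_num) (p+1)]
    · have h4 : x + 2 ≤ 3 * x := by linarith
      calc (x+2) ^ (p+1) ≤ (3*x) ^ (p+1) :=
            Real.rpow_le_rpow (by linarith) h4 (by linarith)
        _ = 3 ^ (p+1) * x ^ (p+1) := Real.mul_rpow (by norm_num) hx.le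
        _ ≤ 3 ^ (p+1) * (1 + x ^ (p+1)) := by
            refine mul_le_mul_of_nonneg_left (by linarith) ?_
            positivity
  -- combine
  have hsplit := (Summable.sum_add_tsum_nat_add (f := φ) (K+1) hφsum).symm
  have hτ0 : 0 ≤ t ^ (-((p+1)/σ)) := Real.rpow_nonneg ht.le _
  have h3p : (0:ℝ) ≤ 3 ^ (p+1) := Real.rpow_nonneg (by norm_num) _
  have hNf : (0:ℝ) ≤ (Nat.factorial N : ℝ) := by positivity
  calc ∑' n, φ n = ∑ n ∈ Finset.range (K+1), φ n + ∑' n, φ (n + (K+1)) := hsplit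
    _ ≤ 3 ^ (p+1) * (1 + t ^ (-((p+1)/σ))) + (Nat.factorial N : ℝ) * t ^ (-((p+1)/σ)) :=
        add_le_add hheadB htailB
    _ ≤ (3 ^ (p+1) + (Nat.factorial N : ℝ)) * (1 + t ^ (-((p+1)/σ))) := by nlinarith

lemma intSum (σ p : ℝ) (hσ : 0 < σ) (hp : 0 < p) :
    ∃ C : ℝ, 0 < C ∧ ∀ t : ℝ, 0 < t →
      Summable (fun k : ℤ => ((k.natAbs : ℝ)) ^ p * Real.exp (-(t * (k.natAbs : ℝ) ^ σ))) ∧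
      ∑' k : ℤ, ((k.natAbs : ℝ)) ^ p * Real.exp (-(t * (k.natAbs : ℝ) ^ σ))
        ≤ C * Real.exp (-t/2) * (1 + t ^ (-((p+1)/σ))) := by
  obtain ⟨C', hC', h'⟩ := natSum σ p hσ hp
  have hq : 0 < (p+1)/σ := by positivity
  have h2q : (1:ℝ) ≤ 2 ^ ((p+1)/σ) := Real.one_le_rpow (by norm_num) hq.le
  refine ⟨2 * C' * 2 ^ ((p+1)/σ), by positivity, fun t ht => ?_⟩
  have ht2 : 0 < t/2 := by linarith
  obtain ⟨hsum2, hbound2⟩ := h' (t/2) ht2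
  set ψ : ℕ → ℝ := fun n => (n:ℝ) ^ p * Real.exp (-(t * (n:ℝ) ^ σ)) with hψdef
  set ψ2 : ℕ → ℝ := fun n => (n:ℝ) ^ p * Real.exp (-(t/2 * (n:ℝ) ^ σ)) with hψ2def
  have hψnonneg : ∀ n, 0 ≤ ψ n := fun n => by positivity
  -- pointwise: ψ n ≤ exp(-t/2) * ψ2 n
  have hpt : ∀ n : ℕ, ψ n ≤ Real.exp (-t/2) * ψ2 n := by
    intro n
    rcases Nat.eq_zero_or_pos n with rfl | hn
    · simp only [hψdef, hψ2def, Nat.cast_zero, Real.zero_rpow hp.ne', zero_mul, mul_zero]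
      exact le_refl 0
    · have hn1 : (1:ℝ) ≤ (n:ℝ) := by exact_mod_cast hn
      have hnσ : (1:ℝ) ≤ (n:ℝ) ^ σ := Real.one_le_rpow hn1 hσ.le
      have hkey : -(t * (n:ℝ) ^ σ) ≤ -t/2 + -(t/2 * (n:ℝ) ^ σ) := by nlinarith
      calc ψ n = (n:ℝ) ^ p * Real.exp (-(t * (n:ℝ) ^ σ)) := rfl
        _ ≤ (n:ℝ) ^ p * Real.exp (-t/2 + -(t/2 * (n:ℝ) ^ σ)) := by
            exact mul_le_mul_of_nonneg_left (Real.exp_le_exp.mpr hkey)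
              (Real.rpow_nonneg (Nat.cast_nonneg n) p)
        _ = Real.exp (-t/2) * ψ2 n := by rw [Real.exp_add]; ring
  have hψsum : Summable ψ :=
    Summable.of_nonneg_of_le hψnonneg hpt (hsum2.mul_left _)
  have hψtsum : ∑' n, ψ n ≤ Real.exp (-t/2) * ∑' n, ψ2 n := by
    have := Summable.tsum_le_tsum hpt hψsum (hsum2.mul_left _)
    rwa [tsum_mul_left] at this
  -- ℤ summability and sum
  have hnat : (fun n : ℕ => ((((n:ℤ)).natAbs : ℝ)) ^ p *
      Real.exp (-(t * (((n:ℤ)).natAbs : ℝ) ^ σ))) = ψ := by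
    funext n; simp [hψdef]
  have hneg : (fun n : ℕ => ((((-((n:ℤ)+1))).natAbs : ℝ)) ^ p *
      Real.exp (-(t * (((-((n:ℤ)+1))).natAbs : ℝ) ^ σ))) = fun n => ψ (n+1) := by
    funext n
    have : ((-((n:ℤ)+1))).natAbs = n + 1 := by
      rw [Int.natAbs_neg]
      exact_mod_cast Int.natAbs_natCast (n+1)
    rw [this]
  have hsum_shift : Summable (fun n => ψ (n+1)) := (summable_nat_add_iff 1).mpr hψsum
  have hA : Summable (fun n : ℕ => ((((n:ℤ)).natAbs : ℝ)) ^ p *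
      Real.exp (-(t * (((n:ℤ)).natAbs : ℝ) ^ σ))) := by rw [hnat]; exact hψsum
  have hB : Summable (fun n : ℕ => ((((-((n:ℤ)+1))).natAbs : ℝ)) ^ p *
      Real.exp (-(t * (((-((n:ℤ)+1))).natAbs : ℝ) ^ σ))) := by rw [hneg]; exact hsum_shift
  constructor
  · exact Summable.of_nat_of_neg_add_one
      (f := fun k : ℤ => ((k.natAbs : ℝ)) ^ p * Real.exp (-(t * (k.natAbs : ℝ) ^ σ))) hA hB
  · have htsplit := tsum_of_nat_of_neg_add_one
      (f := fun k : ℤ => ((k.natAbs : ℝ)) ^ p * Real.exp (-(t * (k.natAbs : ℝ) ^ σ))) hA hB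
    rw [hnat, hneg] at htsplit
    have hshift_le : ∑' n, ψ (n+1) ≤ ∑' n, ψ n := by
      have := Summable.sum_add_tsum_nat_add (f := ψ) 1 hψsum
      have h0 : 0 ≤ ∑ i ∈ Finset.range 1, ψ i := Finset.sum_nonneg fun i _ => hψnonneg i
      linarith [this]
    have htot : ∑' k : ℤ, ((k.natAbs : ℝ)) ^ p * Real.exp (-(t * (k.natAbs : ℝ) ^ σ))
        ≤ 2 * (Real.exp (-t/2) * ∑' n, ψ2 n) := by
      rw [htsplit]
      have h1 : ∑' n, ψ (n+1) ≤ Real.exp (-t/2) * ∑' n, ψ2 n := hshift_le.trans hψtsum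
      linarith [hψtsum]
    refine htot.trans ?_
    -- now bound exp(-t/2) * ∑ ψ2 using hbound2 and (t/2)^{-q} = 2^q t^{-q}
    have hq2 : (t/2) ^ (-((p+1)/σ)) = 2 ^ ((p+1)/σ) * t ^ (-((p+1)/σ)) := by
      rw [Real.div_rpow ht.le (by norm_num), Real.rpow_neg (by norm_num : (0:ℝ) ≤ 2)]
      field_simp
    have hb2 : ∑' n, ψ2 n ≤ C' * (2 ^ ((p+1)/σ) * (1 + t ^ (-((p+1)/σ)))) := by
      refine hbound2.trans ?_
      rw [hq2]
      have hτ : 0 ≤ t ^ (-((p+1)/σ)) := Real.rpow_nonneg ht.le _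
      nlinarith
    have hexp : 0 ≤ Real.exp (-t/2) := (Real.exp_pos _).le
    calc 2 * (Real.exp (-t/2) * ∑' n, ψ2 n)
        ≤ 2 * (Real.exp (-t/2) * (C' * (2 ^ ((p+1)/σ) * (1 + t ^ (-((p+1)/σ)))))) := by
          refine mul_le_mul_of_nonneg_left (mul_le_mul_of_nonneg_left hb2 hexp) (by norm_num)
      _ = 2 * C' * 2 ^ ((p+1)/σ) * Real.exp (-t/2) * (1 + t ^ (-((p+1)/σ))) := by ring

lemma heatMul_norm (σ ωav t : ℝ) (k : ℤ) :
    ‖heatMul σ ωav t k‖ = Real.exp (-(t * (|k| : ℝ) ^ σ)) := by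
  rw [heatMul, Complex.norm_exp]
  congr 1
  simp

lemma fourierCoeff_norm_le (f : AddCircle (2 * Real.pi) → ℂ) (n : ℤ) :
    ‖fourierCoeff f n‖ ≤ (2 * Real.pi)⁻¹ * ∫ x, ‖f x‖ ∂volume := by
  have h1 : ‖fourierCoeff f n‖
      ≤ ∫ x, ‖f x‖ ∂(@AddCircle.haarAddCircle (2*Real.pi) _) := by
    rw [fourierCoeff]
    refine (norm_integral_le_integral_norm _).trans_eq ?_
    refine integral_congr_ae (Filter.Eventually.of_forall fun x => ?_)
    show ‖(fourier (-n)) x • f x‖ = ‖f x‖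
    rw [norm_smul]
    simp [Circle.norm_coe]
  have h2 : ∫ x, ‖f x‖ ∂(@AddCircle.haarAddCircle (2*Real.pi) _)
      = (2*Real.pi)⁻¹ * ∫ x, ‖f x‖ ∂volume := by
    have hv := AddCircle.volume_eq_smul_haarAddCircle (T := 2*Real.pi)
    rw [hv, integral_smul_measure, ENNReal.toReal_ofReal (by positivity : (0:ℝ) ≤ 2*Real.pi),
      smul_eq_mul, inv_mul_cancel_left₀ (by positivity : (0:ℝ) < 2*Real.pi).ne']
  exact h1.trans_eq h2

lemma eLp_eq (f : AddCircle (2*Real.pi) → ℂ) (hf : Integrable f volume) :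
    eLpNorm f 1 volume = ENNReal.ofReal (∫ x, ‖f x‖ ∂volume) := by
  rw [eLpNorm_one_eq_lintegral_enorm, ← ofReal_integral_norm_eq_lintegral_enorm hf]

end Stmt5Aux

/-- For `σ > 0` and `s > 0` there is `C > 0`, independent of `t`, such that for every
`f ∈ L¹(𝕊)` and every `t > 0`, the function `g = e^(−tL) f` (characterized by its Fourier
coefficients `ĝ(k) = e^(−t|k|^σ − i t ω_av sgn k) f̂(k)`) satisfies
`‖g‖_{Ḣ^s} ≤ C e^(−t/4)(1 + t^(−(2s+1)/(2σ))) ‖f‖_{L¹}`. -/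
theorem stmt5 (σ ωav s : ℝ) (hσ : 0 < σ) (hs : 0 < s) :
    ∃ C : ℝ, 0 < C ∧
      ∀ (f g : AddCircle (2 * Real.pi) → ℂ) (t : ℝ), 0 < t →
        Integrable f volume →
        (∀ k : ℤ, fourierCoeff g k = heatMul σ ωav t k * fourierCoeff f k) →
        hSobNorm s g ≤
          ENNReal.ofReal (C * Real.exp (-t / 4) * (1 + t ^ (-((2 * s + 1) / (2 * σ))))) *
            eLpNorm f 1 volume := by
  have hπ : (0:ℝ) < 2 * Real.pi := by positivity
  obtain ⟨C₁, hC₁, hint⟩ := intSum σ (2*s) hσ (by positivity)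
  refine ⟨C₁ ^ ((1:ℝ)/2) * (2*Real.pi)⁻¹ + 1, by positivity, fun f g t ht hf hg => ?_⟩
  obtain ⟨hsum, hbound⟩ := hint (2*t) (by linarith)
  set I : ℝ := ∫ x, ‖f x‖ ∂volume with hIdef
  have hI : 0 ≤ I := integral_nonneg fun x => norm_nonneg _
  set M : ℝ := (2*Real.pi)⁻¹ * I with hMdef
  have hM : 0 ≤ M := mul_nonneg (by positivity) hI
  set w : ℤ → ℝ := fun k => ((k.natAbs:ℝ)) ^ (2*s) * Real.exp (-((2*t) * (k.natAbs:ℝ) ^ σ))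
    with hwdef
  have hwnonneg : ∀ k, 0 ≤ w k := fun k => by positivity
  set q : ℝ := (2*s+1)/σ with hqdef
  have hq : 0 < q := by positivity
  -- pointwise bound on coefficients
  have hb : ∀ k : ℤ, |(k:ℝ)| ^ (2*s) * ‖fourierCoeff g k‖ ^ 2 ≤ w k * M ^ 2 := by
    intro k
    have hcast : |(k:ℝ)| = ((k.natAbs:ℕ):ℝ) := by
      rw [← Int.cast_abs, Int.abs_eq_natAbs, Int.cast_natCast]
    have hA : (0:ℝ) ≤ ((k.natAbs:ℕ):ℝ) := Nat.cast_nonneg _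
    rw [hg k, norm_mul, heatMul_norm, mul_pow, hcast]
    have hsq : Real.exp (-(t * ((k.natAbs:ℕ):ℝ) ^ σ)) ^ 2
        = Real.exp (-((2*t) * ((k.natAbs:ℕ):ℝ) ^ σ)) := by
      rw [← Real.exp_nat_mul]
      congr 1
      push_cast
      ring
    rw [hsq]
    have hcoef : ‖fourierCoeff f k‖ ^ 2 ≤ M ^ 2 :=
      pow_le_pow_left₀ (norm_nonneg _) (fourierCoeff_norm_le f k) 2
    calc ((k.natAbs:ℕ):ℝ) ^ (2*s) * (Real.exp (-((2*t) * ((k.natAbs:ℕ):ℝ) ^ σ)) *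
            ‖fourierCoeff f k‖ ^ 2)
        ≤ ((k.natAbs:ℕ):ℝ) ^ (2*s) * (Real.exp (-((2*t) * ((k.natAbs:ℕ):ℝ) ^ σ)) * M ^ 2) := by
          have h0 : (0:ℝ) ≤ ((k.natAbs:ℕ):ℝ) ^ (2*s) := Real.rpow_nonneg hA _
          have h1 : (0:ℝ) ≤ Real.exp (-((2*t) * ((k.natAbs:ℕ):ℝ) ^ σ)) := (Real.exp_pos _).le
          exact mul_le_mul_of_nonneg_left (mul_le_mul_of_nonneg_left hcoef h1) h0
      _ = w k * M ^ 2 := by rw [hwdef]; ring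
  have hsum' : Summable (fun k : ℤ => w k * M ^ 2) := hsum.mul_right _
  -- ENNReal step
  have key1 : hSobNorm s g ≤ (ENNReal.ofReal (∑' k : ℤ, w k * M ^ 2)) ^ ((1:ℝ)/2) := by
    rw [hSobNorm]
    refine ENNReal.rpow_le_rpow ?_ (by norm_num)
    rw [ENNReal.ofReal_tsum_of_nonneg (fun k => mul_nonneg (hwnonneg k) (sq_nonneg M)) hsum']
    exact ENNReal.tsum_le_tsum fun k => ENNReal.ofReal_le_ofReal (hb k)
  -- real sum bound
  have hreal : ∑' k : ℤ, w k * M ^ 2 ≤ (C₁ * Real.exp (-t) * (1 + t ^ (-q))) * M ^ 2 := by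
    rw [tsum_mul_right]
    refine mul_le_mul_of_nonneg_right ?_ (sq_nonneg M)
    refine hbound.trans ?_
    have hE : Real.exp (-(2*t)/2) = Real.exp (-t) := by congr 1; ring
    have h2t : (2*t) ^ (-q) ≤ t ^ (-q) :=
      Real.rpow_le_rpow_of_nonpos ht (by linarith) (by linarith)
    rw [hE]
    have hτ : (0:ℝ) ≤ (2*t) ^ (-q) := Real.rpow_nonneg (by linarith) _
    have := mul_le_mul_of_nonneg_left (add_le_add_left h2t 1)
      (mul_nonneg hC₁.le (Real.exp_pos (-t)).le)
    linarith [this]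
  have hrsum_nonneg : (0:ℝ) ≤ ∑' k : ℤ, w k * M ^ 2 :=
    tsum_nonneg fun k => mul_nonneg (hwnonneg k) (sq_nonneg M)
  -- real rpow bound
  have hτ0 : (0:ℝ) ≤ t ^ (-q) := Real.rpow_nonneg ht.le _
  have hB0 : (0:ℝ) ≤ C₁ * Real.exp (-t) * (1 + t ^ (-q)) := by positivity
  have hhalf : ∀ τ : ℝ, 0 ≤ τ → (1 + τ) ^ ((1:ℝ)/2) ≤ 1 + τ ^ ((1:ℝ)/2) := by
    intro τ hτ
    have ha : (0:ℝ) ≤ τ ^ ((1:ℝ)/2) := Real.rpow_nonneg hτ _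
    have hsq : (τ ^ ((1:ℝ)/2)) ^ (2:ℕ) = τ := by
      rw [← Real.rpow_natCast (τ ^ ((1:ℝ)/2)) 2, ← Real.rpow_mul hτ]
      norm_num
    have h1 : 1 + τ ≤ (1 + τ ^ ((1:ℝ)/2)) ^ (2:ℕ) := by nlinarith
    calc (1 + τ) ^ ((1:ℝ)/2) ≤ ((1 + τ ^ ((1:ℝ)/2)) ^ (2:ℕ)) ^ ((1:ℝ)/2) :=
          Real.rpow_le_rpow (by linarith) h1 (by norm_num)
      _ = 1 + τ ^ ((1:ℝ)/2) := by
          rw [← Real.rpow_natCast (1 + τ ^ ((1:ℝ)/2)) 2, ← Real.rpow_mul (by linarith)]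
          norm_num
  have hBsplit : ((C₁ * Real.exp (-t) * (1 + t ^ (-q))) * M ^ 2) ^ ((1:ℝ)/2)
      ≤ (C₁ ^ ((1:ℝ)/2) * Real.exp (-t/4) * (1 + t ^ (-(q/2)))) * M := by
    have hM2 : (M ^ 2) ^ ((1:ℝ)/2) = M := by
      rw [← Real.rpow_natCast M 2, ← Real.rpow_mul hM]
      norm_num
    have e1 : ((C₁ * Real.exp (-t) * (1 + t ^ (-q))) * M ^ 2) ^ ((1:ℝ)/2)
        = C₁ ^ ((1:ℝ)/2) * (Real.exp (-t)) ^ ((1:ℝ)/2) * (1 + t ^ (-q)) ^ ((1:ℝ)/2) * M := by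
      rw [Real.mul_rpow hB0 (sq_nonneg M), Real.mul_rpow (by positivity) (by linarith),
        Real.mul_rpow hC₁.le (Real.exp_pos _).le, hM2]
    rw [e1]
    have hexp : (Real.exp (-t)) ^ ((1:ℝ)/2) ≤ Real.exp (-t/4) := by
      rw [← Real.exp_mul]
      refine Real.exp_le_exp.mpr ?_
      nlinarith
    have hhalf' : (1 + t ^ (-q)) ^ ((1:ℝ)/2) ≤ 1 + t ^ (-(q/2)) := by
      refine (hhalf _ hτ0).trans_eq ?_
      congr 1
      rw [← Real.rpow_mul ht.le]
      congr 1
      ring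
    have hc12 : (0:ℝ) ≤ C₁ ^ ((1:ℝ)/2) := Real.rpow_nonneg hC₁.le _
    have h12 : (0:ℝ) ≤ (1 + t ^ (-q)) ^ ((1:ℝ)/2) := Real.rpow_nonneg (by linarith) _
    refine mul_le_mul_of_nonneg_right ?_ hM
    calc C₁ ^ ((1:ℝ)/2) * (Real.exp (-t)) ^ ((1:ℝ)/2) * (1 + t ^ (-q)) ^ ((1:ℝ)/2)
        ≤ C₁ ^ ((1:ℝ)/2) * Real.exp (-t/4) * (1 + t ^ (-q)) ^ ((1:ℝ)/2) := by
          exact mul_le_mul_of_nonneg_right (mul_le_mul_of_nonneg_left hexp hc12) h12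
      _ ≤ C₁ ^ ((1:ℝ)/2) * Real.exp (-t/4) * (1 + t ^ (-(q/2))) := by
          exact mul_le_mul_of_nonneg_left hhalf' (by positivity)
  -- exponent identity
  have hqq : -(q/2) = -((2*s+1)/(2*σ)) := by
    rw [hqdef]
    ring
  -- final chain
  have hfinal : (C₁ ^ ((1:ℝ)/2) * Real.exp (-t/4) * (1 + t ^ (-(q/2)))) * M
      ≤ ((C₁ ^ ((1:ℝ)/2) * (2*Real.pi)⁻¹ + 1) * Real.exp (-t/4)
          * (1 + t ^ (-((2*s+1)/(2*σ))))) * I := by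
    rw [← hqq, hMdef]
    have h1 : C₁ ^ ((1:ℝ)/2) * (2*Real.pi)⁻¹ ≤ C₁ ^ ((1:ℝ)/2) * (2*Real.pi)⁻¹ + 1 := by linarith
    have hτq : (0:ℝ) ≤ t ^ (-(q/2)) := Real.rpow_nonneg ht.le _
    have h2 : (0:ℝ) ≤ Real.exp (-t/4) * (1 + t ^ (-(q/2))) * I := by positivity
    calc (C₁ ^ ((1:ℝ)/2) * Real.exp (-t/4) * (1 + t ^ (-(q/2)))) * ((2*Real.pi)⁻¹ * I)
        = (C₁ ^ ((1:ℝ)/2) * (2*Real.pi)⁻¹) * (Real.exp (-t/4) * (1 + t ^ (-(q/2))) * I) := by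
          ring
      _ ≤ (C₁ ^ ((1:ℝ)/2) * (2*Real.pi)⁻¹ + 1) * (Real.exp (-t/4) * (1 + t ^ (-(q/2))) * I) :=
          mul_le_mul_of_nonneg_right h1 h2
      _ = ((C₁ ^ ((1:ℝ)/2) * (2*Real.pi)⁻¹ + 1) * Real.exp (-t/4) * (1 + t ^ (-(q/2)))) * I := by
          ring
  calc hSobNorm s g ≤ (ENNReal.ofReal (∑' k : ℤ, w k * M ^ 2)) ^ ((1:ℝ)/2) := key1
    _ = ENNReal.ofReal ((∑' k : ℤ, w k * M ^ 2) ^ ((1:ℝ)/2)) :=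
        ENNReal.ofReal_rpow_of_nonneg hrsum_nonneg (by norm_num)
    _ ≤ ENNReal.ofReal (((C₁ * Real.exp (-t) * (1 + t ^ (-q))) * M ^ 2) ^ ((1:ℝ)/2)) :=
        ENNReal.ofReal_le_ofReal (Real.rpow_le_rpow hrsum_nonneg hreal (by norm_num))
    _ ≤ ENNReal.ofReal (((C₁ ^ ((1:ℝ)/2) * (2*Real.pi)⁻¹ + 1) * Real.exp (-t/4)
          * (1 + t ^ (-((2*s+1)/(2*σ))))) * I) :=
        ENNReal.ofReal_le_ofReal (hBsplit.trans hfinal)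
    _ = ENNReal.ofReal ((C₁ ^ ((1:ℝ)/2) * (2*Real.pi)⁻¹ + 1) * Real.exp (-t/4)
          * (1 + t ^ (-((2*s+1)/(2*σ))))) * eLpNorm f 1 volume := by
        rw [eLp_eq f hf, ← ENNReal.ofReal_mul]
        have hτ : (0:ℝ) ≤ t ^ (-((2*s+1)/(2*σ))) := Real.rpow_nonneg ht.le _
        have hc12 : (0:ℝ) ≤ C₁ ^ ((1:ℝ)/2) := Real.rpow_nonneg hC₁.le _
        positivity

end
end

section
/- Let s > 1/2 and m ∈ [0, s]. There exists a constant c > 0 such that for all periodic functions f and g on [−π, π] with zero mean, if ‖f‖_{Ḣ^m} < ∞ and ‖g‖_{Ḣ^s} < ∞, then the product fg satisfies ‖fg‖_{Ḣ^m} ≤ c ‖f‖_{Ḣ^m} ‖g‖_{Ḣ^s}. -/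
open MeasureTheory
open scoped ENNReal

noncomputable section

open AddCircle
open scoped NNReal

set_option linter.unusedSectionVars false

section Aux

variable {T : ℝ} [hT : Fact (0 < T)]

/-- Integration against an integrable `w` as a continuous linear functional on `C(AddCircle T, ℂ)`. -/
lemma integral_continuous_mul_eq_zero {w : AddCircle T → ℂ}
    (hw : Integrable w haarAddCircle) (h0 : ∀ n : ℤ, fourierCoeff w n = 0)
    (c : C(AddCircle T, ℂ)) : ∫ x, c x * w x ∂haarAddCircle = 0 := by
  have hint : ∀ c : C(AddCircle T, ℂ), Integrable (fun x => c x * w x) haarAddCircle := by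
    intro c
    exact hw.bdd_mul c.continuous.aestronglyMeasurable
      (Filter.Eventually.of_forall fun x => c.norm_coe_le_norm x)
  let Ψ₀ : C(AddCircle T, ℂ) →ₗ[ℂ] ℂ :=
    { toFun := fun c => ∫ x, c x * w x ∂haarAddCircle
      map_add' := by
        intro c d
        simp only [ContinuousMap.add_apply, add_mul]
        exact integral_add (hint c) (hint d)
      map_smul' := by
        intro a c
        simp only [ContinuousMap.smul_apply, smul_eq_mul, mul_assoc, RingHom.id_apply]
        exact integral_const_mul a _ }
  let Ψ : C(AddCircle T, ℂ) →L[ℂ] ℂ :=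
    Ψ₀.mkContinuous (∫ x, ‖w x‖ ∂haarAddCircle) (by
      intro c
      calc ‖∫ x, c x * w x ∂haarAddCircle‖ ≤ ∫ x, ‖c x * w x‖ ∂haarAddCircle :=
            norm_integral_le_integral_norm _
        _ ≤ ∫ x, ‖c‖ * ‖w x‖ ∂haarAddCircle := by
            refine integral_mono_of_nonneg (Filter.Eventually.of_forall fun x => norm_nonneg _)
              (hw.norm.const_mul _) (Filter.Eventually.of_forall fun x => ?_)
            dsimp only
            rw [norm_mul]
            exact mul_le_mul_of_nonneg_right (c.norm_coe_le_norm x) (norm_nonneg _)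
        _ = (∫ x, ‖w x‖ ∂haarAddCircle) * ‖c‖ := by rw [integral_const_mul, mul_comm])
  have hker : ∀ u : C(AddCircle T, ℂ), Ψ u = 0 := by
    have hsub : (Submodule.span ℂ (Set.range (@fourier T))) ≤ LinearMap.ker (Ψ : C(AddCircle T, ℂ) →ₗ[ℂ] ℂ) := by
      rw [Submodule.span_le]
      rintro _ ⟨n, rfl⟩
      have : Ψ (fourier n) = fourierCoeff w (-n) := by
        simp only [Ψ, Ψ₀, LinearMap.mkContinuous_apply, LinearMap.coe_mk, AddHom.coe_mk]
        rw [fourierCoeff]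
        congr 1
        ext x
        rw [neg_neg, smul_eq_mul]
      simp only [SetLike.mem_coe, LinearMap.mem_ker, ContinuousLinearMap.coe_coe, this, h0]
    have hclos : (Submodule.span ℂ (Set.range (@fourier T))).topologicalClosure ≤
        LinearMap.ker (Ψ : C(AddCircle T, ℂ) →ₗ[ℂ] ℂ) :=
      Submodule.topologicalClosure_minimal _ hsub (ContinuousLinearMap.isClosed_ker Ψ)
    rw [span_fourier_closure_eq_top] at hclos
    intro u
    exact hclos (Submodule.mem_top (x := u))
  exact hker c

lemma ae_eq_zero_of_fourierCoeff_eq_zero {w : AddCircle T → ℂ}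
    (hw : Integrable w haarAddCircle) (h0 : ∀ n : ℤ, fourierCoeff w n = 0) :
    w =ᵐ[haarAddCircle] 0 := by
  apply ae_eq_zero_of_forall_setIntegral_isClosed_eq_zero hw
  intro s hscl
  -- thickened indicators
  set δ : ℕ → ℝ := fun n => 1 / (n + 1) with hδ
  have δpos : ∀ n, 0 < δ n := fun n => Nat.one_div_pos_of_nat
  have δlim : Filter.Tendsto δ Filter.atTop (nhds 0) := tendsto_one_div_add_atTop_nhds_zero_nat
  have key := thickenedIndicator_tendsto_indicator_closure δpos δlim s
  have ptwise : ∀ x, Filter.Tendsto (fun n => ((thickenedIndicator (δpos n) s x : ℝ) : ℂ) * w x)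
      Filter.atTop (nhds (s.indicator w x)) := by
    intro x
    have h1 : Filter.Tendsto (fun n => (thickenedIndicator (δpos n) s x : ℝ≥0))
        Filter.atTop (nhds ((closure s).indicator (fun _ => (1:ℝ≥0)) x)) :=
      tendsto_pi_nhds.mp key x
    rw [hscl.closure_eq] at h1
    have h2 : Filter.Tendsto (fun n => ((thickenedIndicator (δpos n) s x : ℝ) : ℂ))
        Filter.atTop (nhds (((s.indicator (fun _ => (1:ℝ≥0)) x : ℝ≥0) : ℝ) : ℂ)) :=
      (Complex.continuous_ofReal.tendsto _).comp ((NNReal.continuous_coe.tendsto _).comp h1)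
    have h3 := h2.mul_const (w x)
    convert h3 using 2
    by_cases hx : x ∈ s <;> simp [Set.indicator, hx]
  have hbound : ∀ n, ∀ᵐ x ∂(@haarAddCircle T hT),
      ‖((thickenedIndicator (δpos n) s x : ℝ) : ℂ) * w x‖ ≤ ‖w x‖ := by
    intro n
    refine Filter.Eventually.of_forall fun x => ?_
    rw [norm_mul]
    have h1 : ((thickenedIndicator (δpos n) s x : ℝ)) ≤ 1 := by
      exact_mod_cast thickenedIndicator_le_one (δpos n) s x
    have h2 : (0:ℝ) ≤ (thickenedIndicator (δpos n) s x : ℝ) := (thickenedIndicator (δpos n) s x).2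
    calc ‖((thickenedIndicator (δpos n) s x : ℝ) : ℂ)‖ * ‖w x‖
        ≤ 1 * ‖w x‖ := by
          apply mul_le_mul_of_nonneg_right _ (norm_nonneg _)
          rw [Complex.norm_real, Real.norm_of_nonneg h2]; exact h1
      _ = ‖w x‖ := one_mul _
  have hmeas : ∀ n, AEStronglyMeasurable
      (fun x => ((thickenedIndicator (δpos n) s x : ℝ) : ℂ) * w x) haarAddCircle := by
    intro n
    exact (Complex.continuous_ofReal.comp (NNReal.continuous_coe.comp
      (thickenedIndicator (δpos n) s).continuous)).aestronglyMeasurable.mul hw.1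
  have hDCT := tendsto_integral_of_dominated_convergence (fun x => ‖w x‖) hmeas hw.norm
    hbound (Filter.Eventually.of_forall ptwise)
  have hzero : ∀ n, ∫ x, ((thickenedIndicator (δpos n) s x : ℝ) : ℂ) * w x ∂haarAddCircle = 0 := by
    intro n
    exact integral_continuous_mul_eq_zero hw h0
      ⟨fun x => ((thickenedIndicator (δpos n) s x : ℝ) : ℂ),
        Complex.continuous_ofReal.comp (NNReal.continuous_coe.comp
          (thickenedIndicator (δpos n) s).continuous)⟩
  simp only [hzero] at hDCT
  have : ∫ x, s.indicator w x ∂(@haarAddCircle T hT) = 0 := tendsto_nhds_unique hDCT tendsto_const_nhds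
  rwa [integral_indicator hscl.measurableSet] at this


lemma my_norm_fourier (n : ℤ) (x : AddCircle T) : ‖fourier n x‖ = 1 := Circle.norm_coe _

lemma my_fourierCoeff_eq_inner (u : C(AddCircle T, ℂ)) (n : ℤ) :
    fourierCoeff (⇑u) n = @inner ℂ _ _ (fourierLp 2 n) (ContinuousMap.toLp 2 haarAddCircle ℂ u) := by
  rw [← fourierCoeff_toLp u n, ← fourierBasis_repr]
  rw [HilbertBasis.repr_apply_apply, coe_fourierBasis]

lemma my_fourierCoeff_fourier (j n : ℤ) :
    fourierCoeff (⇑(@fourier T j)) n = if n = j then 1 else 0 := by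
  rw [my_fourierCoeff_eq_inner]
  have ht : ContinuousMap.toLp (E := ℂ) 2 (haarAddCircle (T := T)) ℂ (fourier j) = fourierLp 2 j := rfl
  rw [ht]
  exact orthonormal_iff_ite.mp orthonormal_fourier n j

/-- Sum of a Fourier series with summable coefficients, as a continuous map. -/
def fourierSum (a : ℤ → ℂ) : C(AddCircle T, ℂ) := ∑' j, a j • fourier j

lemma hasSum_fourierSum {a : ℤ → ℂ} (ha : Summable a) :
    HasSum (fun j => a j • @fourier T j) (fourierSum a) := by
  refine Summable.hasSum ?_
  apply Summable.of_norm
  convert ha.norm using 2 with j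
  rw [norm_smul, fourier_norm, mul_one]

lemma fourierCoeff_fourierSum {a : ℤ → ℂ} (ha : Summable a) (n : ℤ) :
    fourierCoeff (⇑(fourierSum (T := T) a)) n = a n := by
  have h1 := hasSum_fourierSum (T := T) ha
  let Φ : C(AddCircle T, ℂ) →L[ℂ] ℂ :=
    ((innerSL ℂ (fourierLp 2 n)).comp (ContinuousMap.toLp 2 haarAddCircle ℂ))
  have h2 := Φ.hasSum h1
  have hΦ : ∀ u : C(AddCircle T, ℂ), Φ u = fourierCoeff (⇑u) n := by
    intro u
    rw [my_fourierCoeff_eq_inner]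
    rfl
  rw [hΦ] at h2
  have h3 : (fun j => Φ (a j • fourier j)) = fun j => if j = n then a n else 0 := by
    funext j
    rw [_root_.map_smul, hΦ, my_fourierCoeff_fourier, smul_eq_mul]
    by_cases h : n = j
    · subst h; simp
    · simp [h, Ne.symm h]
  rw [h3] at h2
  exact h2.unique (hasSum_ite_eq n (a n))

lemma my_fourierCoeff_sub {u v : AddCircle T → ℂ} (hu : Integrable u haarAddCircle)
    (hv : Integrable v haarAddCircle) (n : ℤ) :
    fourierCoeff (fun x => u x - v x) n = fourierCoeff u n - fourierCoeff v n := by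
  have hint : ∀ w : AddCircle T → ℂ, Integrable w haarAddCircle →
      Integrable (fun x => fourier (-n) x • w x) haarAddCircle := by
    intro w hw
    simp only [smul_eq_mul]
    exact hw.bdd_mul (map_continuous (fourier (-n))).aestronglyMeasurable
      (Filter.Eventually.of_forall fun x => le_of_eq (my_norm_fourier _ _))
  simp only [fourierCoeff, smul_sub]
  exact integral_sub (hint u hu) (hint v hv)

lemma integrable_fourierSum (a : ℤ → ℂ) :
    Integrable (⇑(fourierSum (T := T) a)) haarAddCircle := by
  apply Continuous.integrable_of_hasCompactSupport (map_continuous _)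
  exact IsCompact.of_isClosed_subset isCompact_univ (isClosed_tsupport _) (Set.subset_univ _)

/-- An integrable function with summable Fourier coefficients agrees a.e. with its Fourier sum. -/
lemma ae_eq_fourierSum {g : AddCircle T → ℂ} (hg : Integrable g haarAddCircle)
    (hsum : Summable (fourierCoeff g)) :
    g =ᵐ[haarAddCircle] ⇑(fourierSum (T := T) (fourierCoeff g)) := by
  have key : (fun x => g x - fourierSum (T := T) (fourierCoeff g) x) =ᵐ[haarAddCircle] 0 := by
    apply ae_eq_zero_of_fourierCoeff_eq_zero (hg.sub (integrable_fourierSum _))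
    intro n
    show fourierCoeff (fun x => g x - fourierSum (T := T) (fourierCoeff g) x) n = 0
    rw [my_fourierCoeff_sub hg (integrable_fourierSum _), fourierCoeff_fourierSum hsum, sub_eq_zero]
  filter_upwards [key] with x hx
  have hx' : g x - fourierSum (T := T) (fourierCoeff g) x = 0 := hx
  exact sub_eq_zero.mp hx'

lemma fourierSum_apply {a : ℤ → ℂ} (ha : Summable a) (x : AddCircle T) :
    fourierSum a x = ∑' j, a j * fourier j x := by
  have := (ContinuousMap.evalCLM ℂ x).hasSum (hasSum_fourierSum (T := T) ha)
  have h2 : (fun j => (ContinuousMap.evalCLM ℂ x) (a j • @fourier T j)) =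
      fun j => a j * fourier j x := by funext j; simp [ContinuousMap.evalCLM, smul_eq_mul]
  rw [h2] at this
  exact this.tsum_eq.symm

lemma fourierCoeff_mul_eq_tsum {f g : AddCircle T → ℂ}
    (hf : Integrable f haarAddCircle) (hg : Integrable g haarAddCircle)
    (hsum : Summable (fourierCoeff g)) (k : ℤ) :
    fourierCoeff (fun x => f x * g x) k = ∑' j, fourierCoeff g j * fourierCoeff f (k - j) := by
  set a := fourierCoeff g with ha
  have hae := ae_eq_fourierSum hg hsum
  have step1 : fourierCoeff (fun x => f x * g x) k
      = fourierCoeff (fun x => f x * fourierSum (T := T) a x) k := by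
    apply integral_congr_ae
    filter_upwards [hae] with x hx
    rw [hx]
  rw [step1]
  have step2 : ∀ x, fourier (-k) x • (f x * fourierSum (T := T) a x)
      = ∑' j, a j * (fourier (-(k - j)) x * f x) := by
    intro x
    calc fourier (-k) x • (f x * fourierSum (T := T) a x)
        = (fourier (-k) x * f x) * ∑' j, a j * fourier j x := by
          rw [fourierSum_apply hsum, smul_eq_mul]; ring
      _ = ∑' j, (fourier (-k) x * f x) * (a j * fourier j x) := Eq.symm tsum_mul_left
      _ = ∑' j, a j * (fourier (-(k - j)) x * f x) := by
          apply tsum_congr; intro j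
          have hfa : fourier (-k) x * fourier j x = fourier (-(k-j)) x := by
            rw [← fourier_add]; congr 1; ring
          calc (fourier (-k) x * f x) * (a j * fourier j x)
              = a j * (fourier (-k) x * fourier j x * f x) := by ring
            _ = _ := by rw [hfa]
  have hmeas : ∀ j : ℤ, AEStronglyMeasurable
      (fun x => a j * (fourier (-(k - j)) x * f x)) haarAddCircle :=
    fun j => ((map_continuous (fourier (-(k-j)))).aestronglyMeasurable.mul hf.1).const_mul _
  have hlint : ∑' j : ℤ, ∫⁻ x, ‖a j * (fourier (-(k - j)) x * f x)‖₊ ∂haarAddCircle ≠ ⊤ := by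
    have heq : ∀ j : ℤ, ∫⁻ x, ‖a j * (fourier (-(k - j)) x * f x)‖₊ ∂haarAddCircle
        = (‖a j‖₊ : ℝ≥0∞) * ∫⁻ x, ‖f x‖₊ ∂haarAddCircle := by
      intro j
      rw [← lintegral_const_mul' _ _ ENNReal.coe_ne_top]
      congr 1
      funext x
      rw [← ENNReal.coe_mul]
      congr 1
      have hone : ‖fourier (-(k-j)) x‖₊ = 1 :=
        NNReal.coe_injective (by rw [coe_nnnorm, my_norm_fourier (-(k-j)) x, NNReal.coe_one])
      rw [nnnorm_mul, nnnorm_mul, hone, one_mul]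
    rw [funext heq, ENNReal.tsum_mul_right]
    apply ENNReal.mul_ne_top _ hf.2.ne
    rw [ENNReal.tsum_coe_ne_top_iff_summable]
    exact NNReal.summable_coe.mp (by simpa [coe_nnnorm] using summable_norm_iff.mpr hsum)
  have step3 := integral_tsum hmeas hlint
  have step4 : fourierCoeff (fun x => f x * fourierSum (T := T) a x) k
      = ∑' j, ∫ x, a j * (fourier (-(k - j)) x * f x) ∂haarAddCircle := by
    rw [fourierCoeff]
    rw [← step3]
    congr 1
    funext x
    exact step2 x
  rw [step4]
  congr 1
  funext j
  rw [integral_const_mul]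
  simp only [fourierCoeff, smul_eq_mul]

-- real pointwise lemmas
lemma real_sq_rpow (x p : ℝ) (hx : 0 ≤ x) : (x ^ p) ^ 2 = x ^ (2 * p) := by
  rw [← Real.rpow_natCast (x ^ p) 2, ← Real.rpow_mul hx]
  norm_num [mul_comm]

lemma key_real {m s : ℝ} (hm0 : 0 ≤ m) (hms : m ≤ s) {a b t : ℝ}
    (ha : 1 ≤ a) (hb : 1 ≤ b) (ht0 : 0 ≤ t) (ht : t ≤ a + b) :
    t ^ m ≤ 2 ^ m * (b ^ m + a ^ s * b ^ (m - s)) := by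
  have ha0 : (0:ℝ) < a := lt_of_lt_of_le one_pos ha
  have hb0 : (0:ℝ) < b := lt_of_lt_of_le one_pos hb
  have h1 : t ^ m ≤ (a + b) ^ m := Real.rpow_le_rpow ht0 ht hm0
  rcases le_total a b with hab | hab
  · have h2 : (a + b) ^ m ≤ (2 * b) ^ m :=
      Real.rpow_le_rpow (by linarith) (by linarith) hm0
    have h3 : (2 * b) ^ m = 2 ^ m * b ^ m :=
      Real.mul_rpow (by norm_num) (le_of_lt hb0)
    have h4 : 0 ≤ a ^ s * b ^ (m - s) := by positivity
    nlinarith [Real.rpow_nonneg (le_of_lt hb0) m, Real.rpow_nonneg (by norm_num : (0:ℝ) ≤ 2) m]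
  · have h2 : (a + b) ^ m ≤ (2 * a) ^ m :=
      Real.rpow_le_rpow (by linarith) (by linarith) hm0
    have h3 : (2 * a) ^ m = 2 ^ m * a ^ m :=
      Real.mul_rpow (by norm_num) (le_of_lt ha0)
    have h5 : a ^ m = a ^ s * a ^ (m - s) := by
      rw [← Real.rpow_add ha0]; ring_nf
    have h6 : a ^ (m - s) ≤ b ^ (m - s) :=
      Real.rpow_le_rpow_of_nonpos hb0 hab (by linarith)
    have h7 : a ^ m ≤ a ^ s * b ^ (m - s) := by
      rw [h5]
      exact mul_le_mul_of_nonneg_left h6 (Real.rpow_nonneg (le_of_lt ha0) s)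
    have h8 : 0 ≤ b ^ m := Real.rpow_nonneg (le_of_lt hb0) m
    have h9 : 0 ≤ (2:ℝ) ^ m := Real.rpow_nonneg (by norm_num) m
    calc t ^ m ≤ (2 * a) ^ m := le_trans h1 h2
      _ = 2 ^ m * a ^ m := h3
      _ ≤ 2 ^ m * (a ^ s * b ^ (m - s)) := mul_le_mul_of_nonneg_left h7 h9
      _ ≤ 2 ^ m * (b ^ m + a ^ s * b ^ (m - s)) := by nlinarith


lemma my_norm_fourierCoeff_le (f : AddCircle T → ℂ) (n : ℤ) :
    ‖fourierCoeff f n‖ ≤ ∫ x, ‖f x‖ ∂haarAddCircle := by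
  rw [fourierCoeff]
  refine le_trans (norm_integral_le_integral_norm _) (le_of_eq ?_)
  congr 1
  funext x
  rw [norm_smul]
  have : ‖fourier (-n) x‖ = 1 := Circle.norm_coe _
  rw [this, one_mul]

end Aux

lemma ennreal_cs (u v : ℤ → ℝ≥0∞) :
    ∑' i, u i * v i ≤ (∑' i, u i ^ (2:ℝ)) ^ (1/2:ℝ) * (∑' i, v i ^ (2:ℝ)) ^ (1/2:ℝ) := by
  have hpq : Real.HolderConjugate 2 2 := by constructor <;> norm_num
  have := ENNReal.lintegral_mul_le_Lp_mul_Lq (μ := MeasureTheory.Measure.count (α := ℤ)) hpq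
    (f := u) (g := v) (measurable_from_top).aemeasurable (measurable_from_top).aemeasurable
  simpa [MeasureTheory.lintegral_count] using this

lemma ennreal_sq_mono {x y : ℝ≥0∞} (h : x ≤ y) : x ^ (2:ℝ) ≤ y ^ (2:ℝ) :=
  ENNReal.rpow_le_rpow h (by norm_num)

lemma ennreal_half_sq (x : ℝ≥0∞) : (x ^ (1/2:ℝ)) ^ (2:ℝ) = x := by
  rw [← ENNReal.rpow_mul]; norm_num

lemma ennreal_sq_half (x : ℝ≥0∞) : (x ^ (2:ℝ)) ^ (1/2:ℝ) = x := by
  rw [← ENNReal.rpow_mul]; norm_num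

lemma ennreal_self_half_half (x : ℝ≥0∞) : x ^ (1/2:ℝ) * x ^ (1/2:ℝ) = x := by
  rw [← ENNReal.rpow_add_of_nonneg (x := x) _ _ (by norm_num) (by norm_num)]; norm_num

lemma ennreal_sq_eq (x : ℝ≥0∞) : x ^ (2:ℝ) = x * x := by
  rw [show (2:ℝ) = (1:ℝ)+1 by norm_num,
    ENNReal.rpow_add_of_nonneg (x := x) _ _ (by norm_num) (by norm_num), ENNReal.rpow_one]

/-- Young's inequality `‖a ⋆ b‖_{ℓ²} ≤ ‖a‖_{ℓ¹} ‖b‖_{ℓ²}` on `ℤ`, in `ℝ≥0∞`. -/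
lemma ennreal_young (a b : ℤ → ℝ≥0∞) :
    ∑' k, (∑' j, a j * b (k - j)) ^ (2:ℝ)
      ≤ (∑' j, a j) ^ (2:ℝ) * ∑' l, b l ^ (2:ℝ) := by
  have key : ∀ k, (∑' j, a j * b (k - j)) ^ (2:ℝ)
      ≤ (∑' j, a j) * ∑' j, a j * b (k - j) ^ (2:ℝ) := by
    intro k
    have h1 : ∑' j, a j * b (k - j)
        = ∑' j, (a j ^ (1/2:ℝ)) * (a j ^ (1/2:ℝ) * b (k - j)) := by
      congr 1; funext j; rw [← mul_assoc, ennreal_self_half_half]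
    have h2 := ennreal_cs (fun j => a j ^ (1/2:ℝ)) (fun j => a j ^ (1/2:ℝ) * b (k - j))
    rw [h1]
    calc (∑' j, (a j ^ (1/2:ℝ)) * (a j ^ (1/2:ℝ) * b (k - j))) ^ (2:ℝ)
        ≤ ((∑' j, (a j ^ (1/2:ℝ)) ^ (2:ℝ)) ^ (1/2:ℝ)
            * (∑' j, (a j ^ (1/2:ℝ) * b (k - j)) ^ (2:ℝ)) ^ (1/2:ℝ)) ^ (2:ℝ) :=
          ennreal_sq_mono h2
      _ = (∑' j, (a j ^ (1/2:ℝ)) ^ (2:ℝ)) * ∑' j, (a j ^ (1/2:ℝ) * b (k - j)) ^ (2:ℝ) := by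
          rw [ENNReal.mul_rpow_of_nonneg _ _ (by norm_num : (0:ℝ) ≤ 2),
            ennreal_half_sq, ennreal_half_sq]
      _ = (∑' j, a j) * ∑' j, a j * b (k - j) ^ (2:ℝ) := by
          congr 1
          · congr 1; funext j; exact ennreal_half_sq (a j)
          · congr 1; funext j
            rw [ENNReal.mul_rpow_of_nonneg _ _ (by norm_num : (0:ℝ) ≤ 2), ennreal_half_sq]
  calc ∑' k, (∑' j, a j * b (k - j)) ^ (2:ℝ)
      ≤ ∑' k, (∑' j, a j) * ∑' j, a j * b (k - j) ^ (2:ℝ) := ENNReal.tsum_le_tsum key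
    _ = (∑' j, a j) * ∑' k, ∑' j, a j * b (k - j) ^ (2:ℝ) := ENNReal.tsum_mul_left
    _ = (∑' j, a j) * ∑' j, ∑' k, a j * b (k - j) ^ (2:ℝ) := by rw [ENNReal.tsum_comm]
    _ = (∑' j, a j) * ∑' j, a j * ∑' k, b (k - j) ^ (2:ℝ) := by
        congr 1; congr 1; funext j; exact ENNReal.tsum_mul_left
    _ = (∑' j, a j) * ∑' j, a j * ∑' l, b l ^ (2:ℝ) := by
        congr 1; congr 1; funext j; congr 1
        exact Equiv.tsum_eq (Equiv.subRight j) (fun l => b l ^ (2:ℝ))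
    _ = (∑' j, a j) ^ (2:ℝ) * ∑' l, b l ^ (2:ℝ) := by
        rw [ENNReal.tsum_mul_right, ← mul_assoc, ← ennreal_sq_eq]

lemma real_rpow_sq (x p : ℝ) (hx : 0 ≤ x) : (x ^ p) ^ (2:ℝ) = x ^ (2 * p) := by
  rw [← Real.rpow_mul hx]
  congr 1
  ring

lemma ennreal_add_sq_le (x y : ℝ≥0∞) : (x + y) ^ (2:ℝ) ≤ 4 * (x ^ (2:ℝ) + y ^ (2:ℝ)) := by
  have hxy : x * y ≤ x ^ (2:ℝ) + y ^ (2:ℝ) := by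
    rcases le_total x y with h | h
    · calc x * y ≤ y * y := mul_le_mul_left h y
        _ = y ^ (2:ℝ) := (ennreal_sq_eq y).symm
        _ ≤ _ := le_add_self
    · calc x * y ≤ x * x := mul_le_mul_right h x
        _ = x ^ (2:ℝ) := (ennreal_sq_eq x).symm
        _ ≤ _ := le_self_add
  have hexp : (x + y) ^ (2:ℝ) = x * x + x * y + (y * x + y * y) := by
    rw [ennreal_sq_eq]; ring
  rw [hexp]
  have h4 : (4:ℝ≥0∞) * (x ^ (2:ℝ) + y ^ (2:ℝ))
      = (x^(2:ℝ) + y^(2:ℝ)) + (x^(2:ℝ) + y^(2:ℝ)) + ((x^(2:ℝ) + y^(2:ℝ)) + (x^(2:ℝ) + y^(2:ℝ))) := by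
    ring
  rw [h4]
  refine add_le_add (add_le_add ?_ hxy) (add_le_add ?_ ?_)
  · rw [← ennreal_sq_eq]; exact le_self_add
  · rw [mul_comm]; exact hxy
  · rw [← ennreal_sq_eq]; exact le_add_self

lemma hSob_bridge (r : ℝ) (u : AddCircle (2 * Real.pi) → ℂ) :
    hSobNorm r u
      = (∑' k : ℤ, (ENNReal.ofReal (|(k:ℝ)| ^ r * ‖fourierCoeff u k‖)) ^ (2:ℝ)) ^ ((1:ℝ)/2) := by
  rw [hSobNorm]
  congr 1
  apply tsum_congr
  intro k
  rw [ENNReal.ofReal_rpow_of_nonneg (by positivity) (by norm_num)]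
  congr 1
  rw [Real.mul_rpow (by positivity) (norm_nonneg _), real_rpow_sq _ _ (abs_nonneg _)]
  have hnn : ‖fourierCoeff u k‖ ^ (2:ℝ) = ‖fourierCoeff u k‖ ^ (2:ℕ) := by
    rw [← Real.rpow_natCast ‖fourierCoeff u k‖ 2]; norm_num
  rw [hnn]

/-- For `s > 1/2` and `m ∈ [0, s]` there is `c > 0` such that for all periodic functions
`f, g` with zero mean and finite norms `‖f‖_{Ḣ^m}`, `‖g‖_{Ḣ^s}`, the product `fg` satisfies
`‖fg‖_{Ḣ^m} ≤ c ‖f‖_{Ḣ^m} ‖g‖_{Ḣ^s}`. -/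
theorem stmt6 (s m : ℝ) (hs : 1 / 2 < s) (hm0 : 0 ≤ m) (hms : m ≤ s) :
    ∃ c : ℝ, 0 < c ∧
      ∀ f g : AddCircle (2 * Real.pi) → ℂ,
        Integrable f volume → Integrable g volume →
        fourierCoeff f 0 = 0 → fourierCoeff g 0 = 0 →
        hSobNorm m f < ⊤ → hSobNorm s g < ⊤ →
        hSobNorm m (fun x => f x * g x) ≤ ENNReal.ofReal c * hSobNorm m f * hSobNorm s g := by
  classical
  have hs0 : 0 < s := lt_trans (by norm_num) hs
  have h2s : 1 < 2 * s := by linarith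
  set K : ℝ≥0∞ := ∑' k : ℤ, ENNReal.ofReal (|(k:ℝ)| ^ (-(2*s))) with hK
  have hKsum : Summable (fun k : ℤ => |(k:ℝ)| ^ (-(2*s))) := Real.summable_abs_int_rpow h2s
  have hKtop : K ≠ ⊤ := by
    rw [hK, ← ENNReal.ofReal_tsum_of_nonneg (fun k => Real.rpow_nonneg (abs_nonneg _) _) hKsum]
    exact ENNReal.ofReal_ne_top
  set C0 : ℝ≥0∞ := ENNReal.ofReal (2 ^ m) ^ (2:ℝ) * 8 * K with hC0
  have hC0top : C0 ≠ ⊤ := by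
    rw [hC0]
    apply ENNReal.mul_ne_top (ENNReal.mul_ne_top _ (by norm_num)) hKtop
    exact (ENNReal.rpow_lt_top_of_nonneg (by norm_num) ENNReal.ofReal_ne_top).ne
  refine ⟨(C0 ^ (1/2:ℝ)).toReal + 1, by positivity, ?_⟩
  intro f g hfi hgi hf0 hg0 hfS hgS
  -- integrability w.r.t. Haar
  have hconv : ∀ w : AddCircle (2 * Real.pi) → ℂ, Integrable w volume →
      Integrable w haarAddCircle := by
    intro w hw
    rw [volume_eq_smul_haarAddCircle] at hw
    exact (integrable_smul_measure
      (by rw [Ne, ENNReal.ofReal_eq_zero, not_le]; positivity)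
      ENNReal.ofReal_ne_top).mp hw
  have hfi' := hconv f hfi
  have hgi' := hconv g hgi
  set cf := fourierCoeff f with hcf
  set cg := fourierCoeff g with hcg
  set Ff : ℤ → ℝ≥0∞ := fun l => ENNReal.ofReal (|(l:ℝ)| ^ m * ‖cf l‖) with hFf
  set Dg : ℤ → ℝ≥0∞ := fun j => ENNReal.ofReal (|(j:ℝ)| ^ s * ‖cg j‖) with hDg
  set Gg : ℤ → ℝ≥0∞ := fun j => ENNReal.ofReal ‖cg j‖ with hGg
  set Bf : ℤ → ℝ≥0∞ := fun l => ENNReal.ofReal (|(l:ℝ)| ^ (m-s) * ‖cf l‖) with hBf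
  set Sf := ∑' l, Ff l ^ (2:ℝ) with hSf
  set Sg := ∑' j, Dg j ^ (2:ℝ) with hSg
  have hSobf : hSobNorm m f = Sf ^ ((1:ℝ)/2) := hSob_bridge m f
  have hSobg : hSobNorm s g = Sg ^ ((1:ℝ)/2) := hSob_bridge s g
  have hSftop : Sf ≠ ⊤ := by
    rw [hSobf] at hfS
    exact ((ENNReal.rpow_lt_top_iff_of_pos (by norm_num)).mp hfS).ne
  have hSgtop : Sg ≠ ⊤ := by
    rw [hSobg] at hgS
    exact ((ENNReal.rpow_lt_top_iff_of_pos (by norm_num)).mp hgS).ne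
  -- ℓ¹ bounds
  have hKsq : ∀ r : ℝ, 0 < r → ∑' j : ℤ, (ENNReal.ofReal (|(j:ℝ)| ^ (-s))) ^ (2:ℝ) = K := by
    intro r hr
    rw [hK]
    apply tsum_congr
    intro j
    rw [ENNReal.ofReal_rpow_of_nonneg (Real.rpow_nonneg (abs_nonneg _) _) (by norm_num),
      real_rpow_sq _ _ (abs_nonneg _)]
    ring_nf
  have hG1 : ∑' j, Gg j ≤ K ^ (1/2:ℝ) * Sg ^ (1/2:ℝ) := by
    have hle : ∀ j, Gg j ≤ ENNReal.ofReal (|(j:ℝ)| ^ (-s)) * Dg j := by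
      intro j
      by_cases hj : j = 0
      · subst hj
        simp [hGg, hg0]
      · rw [hGg, hDg, ← ENNReal.ofReal_mul (Real.rpow_nonneg (abs_nonneg _) _)]
        apply ENNReal.ofReal_le_ofReal
        have habs : (0:ℝ) < |(j:ℝ)| := abs_pos.mpr (Int.cast_ne_zero.mpr hj)
        rw [← mul_assoc, ← Real.rpow_add habs]
        norm_num
    calc ∑' j, Gg j ≤ ∑' j : ℤ, ENNReal.ofReal (|(j:ℝ)| ^ (-s)) * Dg j := ENNReal.tsum_le_tsum hle
      _ ≤ (∑' j : ℤ, (ENNReal.ofReal (|(j:ℝ)| ^ (-s))) ^ (2:ℝ)) ^ (1/2:ℝ) * (∑' j, Dg j ^ (2:ℝ)) ^ (1/2:ℝ) :=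
          ennreal_cs _ _
      _ = K ^ (1/2:ℝ) * Sg ^ (1/2:ℝ) := by rw [hKsq s hs0, hSg]
  have hB1 : ∑' l, Bf l ≤ K ^ (1/2:ℝ) * Sf ^ (1/2:ℝ) := by
    have hle : ∀ l, Bf l ≤ ENNReal.ofReal (|(l:ℝ)| ^ (-s)) * Ff l := by
      intro l
      by_cases hl : l = 0
      · subst hl
        simp [hBf, hf0]
      · rw [hBf, hFf, ← ENNReal.ofReal_mul (Real.rpow_nonneg (abs_nonneg _) _)]
        apply ENNReal.ofReal_le_ofReal
        have habs : (0:ℝ) < |(l:ℝ)| := abs_pos.mpr (Int.cast_ne_zero.mpr hl)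
        rw [← mul_assoc, ← Real.rpow_add habs]
        have : -s + m = m - s := by ring
        rw [this]
    calc ∑' l, Bf l ≤ ∑' l : ℤ, ENNReal.ofReal (|(l:ℝ)| ^ (-s)) * Ff l := ENNReal.tsum_le_tsum hle
      _ ≤ (∑' l : ℤ, (ENNReal.ofReal (|(l:ℝ)| ^ (-s))) ^ (2:ℝ)) ^ (1/2:ℝ) * (∑' l, Ff l ^ (2:ℝ)) ^ (1/2:ℝ) :=
          ennreal_cs _ _
      _ = K ^ (1/2:ℝ) * Sf ^ (1/2:ℝ) := by rw [hKsq s hs0, hSf]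
  -- summability of the Fourier coefficients of g
  have hGfin : ∑' j, Gg j ≠ ⊤ := by
    refine ne_top_of_le_ne_top ?_ hG1
    exact (ENNReal.mul_ne_top (ENNReal.rpow_lt_top_of_nonneg (by norm_num) hKtop).ne
      (ENNReal.rpow_lt_top_of_nonneg (by norm_num) hSgtop).ne)
  have hgl1 : Summable (fun j => ‖cg j‖) := by
    have heq : ∀ j, ((‖cg j‖₊ : ℝ≥0∞)) = Gg j := fun j => by
      simp only [hGg]; exact (ENNReal.ofReal_eq_coe_nnreal (norm_nonneg _)).symm
    have : ∑' j, (‖cg j‖₊ : ℝ≥0∞) ≠ ⊤ := by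
      rw [tsum_congr heq]; exact hGfin
    have h2 := ENNReal.tsum_coe_ne_top_iff_summable.mp this
    exact NNReal.summable_coe.mpr h2
  have hgsum : Summable cg := Summable.of_norm hgl1
  -- coefficient formula and pointwise bound
  set Mf : ℝ := ∫ x, ‖f x‖ ∂haarAddCircle with hMf
  have hcfM : ∀ l, ‖cf l‖ ≤ Mf := fun l => my_norm_fourierCoeff_le f l
  set P : ℤ → ℝ≥0∞ := fun k => ENNReal.ofReal (|(k:ℝ)| ^ m * ‖fourierCoeff (fun x => f x * g x) k‖)
    with hP
  set X : ℤ → ℝ≥0∞ := fun k => ∑' j, Gg j * Ff (k - j) with hX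
  set Y : ℤ → ℝ≥0∞ := fun k => ∑' j, Dg j * Bf (k - j) with hY
  have hPle : ∀ k, P k ≤ ENNReal.ofReal (2 ^ m) * (X k + Y k) := by
    intro k
    have hsum_k : Summable (fun j => ‖cg j‖ * ‖cf (k - j)‖) := by
      refine Summable.of_nonneg_of_le (fun j => by positivity) (fun j => ?_) (hgl1.mul_right Mf)
      exact mul_le_mul_of_nonneg_left (hcfM _) (norm_nonneg _)
    have hnorm : ‖fourierCoeff (fun x => f x * g x) k‖ ≤ ∑' j, ‖cg j‖ * ‖cf (k - j)‖ := by
      rw [fourierCoeff_mul_eq_tsum hfi' hgi' hgsum k]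
      refine le_trans (norm_tsum_le_tsum_norm ?_) (le_of_eq ?_)
      · simpa [norm_mul] using hsum_k
      · apply tsum_congr; intro j; rw [norm_mul]
    have hperj : ∀ j, ENNReal.ofReal (|(k:ℝ)| ^ m * (‖cg j‖ * ‖cf (k - j)‖))
        ≤ ENNReal.ofReal (2 ^ m) * (Gg j * Ff (k - j) + Dg j * Bf (k - j)) := by
      intro j
      have hrhs : ENNReal.ofReal (2 ^ m) * (Gg j * Ff (k - j) + Dg j * Bf (k - j))
          = ENNReal.ofReal (2 ^ m * (‖cg j‖ * (|((k-j : ℤ):ℝ)| ^ m * ‖cf (k - j)‖)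
            + (|(j:ℝ)| ^ s * ‖cg j‖) * (|((k-j : ℤ):ℝ)| ^ (m-s) * ‖cf (k - j)‖))) := by
        rw [hGg, hFf, hDg, hBf,
          ← ENNReal.ofReal_mul (norm_nonneg _),
          ← ENNReal.ofReal_mul (by positivity),
          ← ENNReal.ofReal_add (by positivity) (by positivity),
          ← ENNReal.ofReal_mul (by positivity)]
      rw [hrhs]
      apply ENNReal.ofReal_le_ofReal
      by_cases hA : ‖cg j‖ = 0
      · rw [hA]; ring_nf; positivity
      by_cases hB : ‖cf (k - j)‖ = 0
      · rw [hB]; ring_nf; positivity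
      have hj : j ≠ 0 := fun h => hA (by rw [h, hg0, norm_zero])
      have hkj : k - j ≠ 0 := fun h => hB (by rw [h, hf0, norm_zero])
      have ha : (1:ℝ) ≤ |(j:ℝ)| := by exact_mod_cast Int.one_le_abs hj
      have hb : (1:ℝ) ≤ |((k-j : ℤ):ℝ)| := by exact_mod_cast Int.one_le_abs hkj
      have ht : |(k:ℝ)| ≤ |(j:ℝ)| + |((k-j : ℤ):ℝ)| := by
        have : (k:ℝ) = (j:ℝ) + ((k-j : ℤ):ℝ) := by push_cast; ring
        rw [this]
        exact abs_add_le _ _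
      have hkey := key_real hm0 hms ha hb (abs_nonneg (k:ℝ)) ht
      have hAB : 0 ≤ ‖cg j‖ * ‖cf (k - j)‖ := by positivity
      calc |(k:ℝ)| ^ m * (‖cg j‖ * ‖cf (k - j)‖)
          ≤ (2 ^ m * (|((k-j : ℤ):ℝ)| ^ m + |(j:ℝ)| ^ s * |((k-j : ℤ):ℝ)| ^ (m - s)))
              * (‖cg j‖ * ‖cf (k - j)‖) := mul_le_mul_of_nonneg_right hkey hAB
        _ = 2 ^ m * (‖cg j‖ * (|((k-j : ℤ):ℝ)| ^ m * ‖cf (k - j)‖)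
            + (|(j:ℝ)| ^ s * ‖cg j‖) * (|((k-j : ℤ):ℝ)| ^ (m-s) * ‖cf (k - j)‖)) := by ring
    calc P k ≤ ENNReal.ofReal (|(k:ℝ)| ^ m * ∑' j, ‖cg j‖ * ‖cf (k - j)‖) := by
          rw [hP]
          exact ENNReal.ofReal_le_ofReal
            (mul_le_mul_of_nonneg_left hnorm (Real.rpow_nonneg (abs_nonneg _) m))
      _ = ENNReal.ofReal (∑' j, |(k:ℝ)| ^ m * (‖cg j‖ * ‖cf (k - j)‖)) := by
          rw [tsum_mul_left]
      _ = ∑' j, ENNReal.ofReal (|(k:ℝ)| ^ m * (‖cg j‖ * ‖cf (k - j)‖)) := by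
          rw [ENNReal.ofReal_tsum_of_nonneg (fun j => by positivity) (hsum_k.mul_left _)]
      _ ≤ ∑' j, ENNReal.ofReal (2 ^ m) * (Gg j * Ff (k - j) + Dg j * Bf (k - j)) :=
          ENNReal.tsum_le_tsum hperj
      _ = ENNReal.ofReal (2 ^ m) * (X k + Y k) := by
          rw [ENNReal.tsum_mul_left, ENNReal.tsum_add]
  -- square-summing
  have hXsum : ∑' k, X k ^ (2:ℝ) ≤ K * Sg * Sf := by
    calc ∑' k, X k ^ (2:ℝ) ≤ (∑' j, Gg j) ^ (2:ℝ) * Sf := ennreal_young Gg Ff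
      _ ≤ (K ^ (1/2:ℝ) * Sg ^ (1/2:ℝ)) ^ (2:ℝ) * Sf :=
          mul_le_mul_left (ennreal_sq_mono hG1) Sf
      _ = K * Sg * Sf := by
          rw [ENNReal.mul_rpow_of_nonneg _ _ (by norm_num : (0:ℝ) ≤ 2),
            ennreal_half_sq, ennreal_half_sq]
  have hYeq : ∀ k, Y k = ∑' i, Bf i * Dg (k - i) := by
    intro k
    rw [hY]
    have := Equiv.tsum_eq (Equiv.subLeft k) (fun i => Bf i * Dg (k - i))
    rw [← this]
    apply tsum_congr
    intro j
    simp only [Equiv.subLeft_apply, sub_sub_cancel]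
    ring
  have hYsum : ∑' k, Y k ^ (2:ℝ) ≤ K * Sf * Sg := by
    calc ∑' k, Y k ^ (2:ℝ) = ∑' k, (∑' i, Bf i * Dg (k - i)) ^ (2:ℝ) := by
          apply tsum_congr; intro k; rw [hYeq k]
      _ ≤ (∑' i, Bf i) ^ (2:ℝ) * Sg := ennreal_young Bf Dg
      _ ≤ (K ^ (1/2:ℝ) * Sf ^ (1/2:ℝ)) ^ (2:ℝ) * Sg :=
          mul_le_mul_left (ennreal_sq_mono hB1) Sg
      _ = K * Sf * Sg := by
          rw [ENNReal.mul_rpow_of_nonneg _ _ (by norm_num : (0:ℝ) ≤ 2),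
            ennreal_half_sq, ennreal_half_sq]
  have hPsum : ∑' k, P k ^ (2:ℝ) ≤ C0 * Sf * Sg := by
    calc ∑' k, P k ^ (2:ℝ)
        ≤ ∑' k, (ENNReal.ofReal (2 ^ m) * (X k + Y k)) ^ (2:ℝ) :=
          ENNReal.tsum_le_tsum (fun k => ennreal_sq_mono (hPle k))
      _ = ∑' k, ENNReal.ofReal (2 ^ m) ^ (2:ℝ) * (X k + Y k) ^ (2:ℝ) := by
          apply tsum_congr; intro k
          rw [ENNReal.mul_rpow_of_nonneg _ _ (by norm_num : (0:ℝ) ≤ 2)]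
      _ ≤ ∑' k, ENNReal.ofReal (2 ^ m) ^ (2:ℝ) * (4 * (X k ^ (2:ℝ) + Y k ^ (2:ℝ))) :=
          ENNReal.tsum_le_tsum (fun k => mul_le_mul_right (ennreal_add_sq_le _ _) _)
      _ = ENNReal.ofReal (2 ^ m) ^ (2:ℝ) * 4 * ((∑' k, X k ^ (2:ℝ)) + ∑' k, Y k ^ (2:ℝ)) := by
          rw [← ENNReal.tsum_add]
          rw [← ENNReal.tsum_mul_left]
          apply tsum_congr; intro k
          ring
      _ ≤ ENNReal.ofReal (2 ^ m) ^ (2:ℝ) * 4 * (K * Sg * Sf + K * Sf * Sg) := by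
          exact mul_le_mul_right (add_le_add hXsum hYsum) _
      _ = C0 * Sf * Sg := by
          rw [hC0]
          ring
  -- conclusion
  have hfinal : hSobNorm m (fun x => f x * g x)
      ≤ C0 ^ (1/2:ℝ) * Sf ^ (1/2:ℝ) * Sg ^ (1/2:ℝ) := by
    have hbr := hSob_bridge m (fun x => f x * g x)
    rw [hbr]
    calc (∑' k : ℤ, (ENNReal.ofReal (|(k:ℝ)| ^ m * ‖fourierCoeff (fun x => f x * g x) k‖)) ^ (2:ℝ)) ^ ((1:ℝ)/2)
        ≤ (C0 * Sf * Sg) ^ ((1:ℝ)/2) := ENNReal.rpow_le_rpow hPsum (by norm_num)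
      _ = C0 ^ (1/2:ℝ) * Sf ^ (1/2:ℝ) * Sg ^ (1/2:ℝ) := by
          rw [ENNReal.mul_rpow_of_nonneg _ _ (by norm_num : (0:ℝ) ≤ 1/2),
            ENNReal.mul_rpow_of_nonneg _ _ (by norm_num : (0:ℝ) ≤ 1/2)]
  have hcle : C0 ^ (1/2:ℝ) ≤ ENNReal.ofReal ((C0 ^ (1/2:ℝ)).toReal + 1) := by
    have hne : C0 ^ (1/2:ℝ) ≠ ⊤ := (ENNReal.rpow_lt_top_of_nonneg (by norm_num) hC0top).ne
    rw [ENNReal.ofReal_add ENNReal.toReal_nonneg (by norm_num), ENNReal.ofReal_toReal hne]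
    exact le_add_right (le_refl _)
  rw [hSobf, hSobg]
  calc hSobNorm m (fun x => f x * g x) ≤ C0 ^ (1/2:ℝ) * Sf ^ (1/2:ℝ) * Sg ^ (1/2:ℝ) := hfinal
    _ ≤ ENNReal.ofReal ((C0 ^ (1/2:ℝ)).toReal + 1) * Sf ^ (1/2:ℝ) * Sg ^ (1/2:ℝ) := by
        exact mul_le_mul_left (mul_le_mul_left hcle _) _

end
end

section
/- Let ν > 0 and K > 0 be real numbers, and let x₁(0), x₂(0) ∈ ℂ satisfy Im x₁(0) < 0 and Im x₂(0) < 0. Then there do not exist continuous functions x₁, x₂ : [0, ∞) → ℂ with the given initial values such that for all t ≥ 0: x₁(t) + x₂(t) = x₁(0) + x₂(0), (x₁(t) − x₂(t))² = (x₁(0) − x₂(0))² − (5/3) K ν t, and Im x₁(t) < 0 and Im x₂(t) < 0. Equivalently, for any continuous x₁, x₂ satisfying the two identities on [0, ∞), there exists a finite time at which Im x₁ = 0 or Im x₂ = 0. -/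
/-- Blow-up mechanism for Schochet's pole-dynamics solution (`a = 0`, `σ = 2`): if
`ν, K > 0` and `x₁, x₂ : [0,∞) → ℂ` are continuous with `Im x₁(0) < 0`, `Im x₂(0) < 0`,
and satisfy `x₁(t) + x₂(t) = x₁(0) + x₂(0)` and
`(x₁(t) − x₂(t))² = (x₁(0) − x₂(0))² − (5/3) K ν t` for all `t ≥ 0`, then there is a
finite time `t ≥ 0` at which `Im x₁ = 0` or `Im x₂ = 0` (equivalently, the trajectories
cannot remain in the open lower half-plane for all time). -/
theorem stmt12 (ν K : ℝ) (hν : 0 < ν) (hK : 0 < K) (x₁ x₂ : ℝ → ℂ)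
    (hc₁ : ContinuousOn x₁ (Set.Ici 0)) (hc₂ : ContinuousOn x₂ (Set.Ici 0))
    (h₁ : (x₁ 0).im < 0) (h₂ : (x₂ 0).im < 0)
    (hsum : ∀ t : ℝ, 0 ≤ t → x₁ t + x₂ t = x₁ 0 + x₂ 0)
    (hdiff : ∀ t : ℝ, 0 ≤ t →
      (x₁ t - x₂ t) ^ 2 =
        (x₁ 0 - x₂ 0) ^ 2 - ((5 : ℂ) / 3) * (K : ℂ) * (ν : ℂ) * (t : ℂ)) :
    ∃ t : ℝ, 0 ≤ t ∧ ((x₁ t).im = 0 ∨ (x₂ t).im = 0) := by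
  set c : ℝ := 5 / 3 * K * ν with hc
  have hcpos : 0 < c := by positivity
  set s : ℝ := (x₁ 0).im + (x₂ 0).im with hs
  set r : ℝ := ((x₁ 0 - x₂ 0) ^ 2).re with hr
  set T : ℝ := (|r| + s ^ 2 + 1) / c with hT
  have hTpos : 0 < T := by
    apply div_pos _ hcpos
    positivity
  have hTnn : (0 : ℝ) ≤ T := hTpos.le
  -- real part of the difference equation at T
  have hre : ((x₁ T - x₂ T) ^ 2).re = r - c * T := by
    have := congrArg Complex.re (hdiff T hTnn)
    simpa [hc, Complex.sub_re, Complex.mul_re, Complex.mul_im, Complex.div_re,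
      Complex.div_im, Complex.normSq] using this
  -- (Im d T)^2 > s^2
  have key : s ^ 2 < ((x₁ T - x₂ T).im) ^ 2 := by
    have hre' : ((x₁ T - x₂ T).re) ^ 2 - ((x₁ T - x₂ T).im) ^ 2 = r - c * T := by
      rw [← hre]
      simp [pow_two, Complex.mul_re]
    have hcT : c * T = |r| + s ^ 2 + 1 := by
      rw [hT]; field_simp
    nlinarith [sq_nonneg ((x₁ T - x₂ T).re), abs_nonneg r, le_abs_self r]
  -- sum of imaginary parts constant
  have hsumim : ∀ t : ℝ, 0 ≤ t → (x₁ t).im + (x₂ t).im = s := by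
    intro t ht
    have := congrArg Complex.im (hsum t ht)
    simpa [Complex.add_im] using this
  have hST := hsumim T hTnn
  have hsneg : s < 0 := by simp [hs]; linarith
  -- either Im (x₁ T) > 0 or Im (x₂ T) > 0
  have hdim : (x₁ T - x₂ T).im = (x₁ T).im - (x₂ T).im := by simp
  have hpos : 0 < (x₁ T).im ∨ 0 < (x₂ T).im := by
    rcases lt_or_ge ((x₁ T - x₂ T).im) 0 with h | h
    · right; nlinarith
    · left; nlinarith
  rcases hpos with h | h
  · -- IVT for x₁.im
    have hcont : ContinuousOn (fun t => (x₁ t).im) (Set.Icc 0 T) :=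
      (Complex.continuous_im.comp_continuousOn
        (hc₁.mono (Set.Icc_subset_Ici_self)))
    have := intermediate_value_Icc hTnn hcont
    have h0 : (0 : ℝ) ∈ Set.Icc ((x₁ 0).im) ((x₁ T).im) := ⟨h₁.le, h.le⟩
    obtain ⟨t, ht, ht0⟩ := this h0
    exact ⟨t, ht.1, Or.inl ht0⟩
  · have hcont : ContinuousOn (fun t => (x₂ t).im) (Set.Icc 0 T) :=
      (Complex.continuous_im.comp_continuousOn
        (hc₂.mono (Set.Icc_subset_Ici_self)))
    have := intermediate_value_Icc hTnn hcont
    have h0 : (0 : ℝ) ∈ Set.Icc ((x₂ 0).im) ((x₂ T).im) := ⟨h₂.le, h.le⟩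
    obtain ⟨t, ht, ht0⟩ := this h0
    exact ⟨t, ht.1, Or.inr ht0⟩
end

section
/- Let ν > 0 and let ω₋₁(0), v_c(0) ∈ ℂ with ω₋₁(0) ≠ ν(1 + v_c(0)), and let t₀ ∈ ℂ satisfy e^(ν t₀) = 1 − ν(1 + v_c(0))/ω₋₁(0). Then on any interval [0, T) on which 1 − e^(−ν(t + t₀)) ≠ 0 and 1 + v_c(t) ≠ 0, the functions ω₋₁(t) = ω₋₁(0) e^(−νt) ((1 − e^(−ν t₀))/(1 − e^(−ν(t + t₀))))² and v_c(t) = (ω₋₁(0)/ν) (1 − e^(−ν t₀))(1 − e^(−νt))/(1 − e^(−ν(t + t₀))) + v_c(0) satisfy the system dω₋₁/dt = −ν ω₋₁ + 2 ω₋₁²/(1 + v_c), dv_c/dt = ω₋₁, with the given initial values. -/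
noncomputable section

/-- `ω₋₁(t) = ω₋₁(0) e^(−νt) ((1 − e^(−ν t₀))/(1 − e^(−ν(t + t₀))))²`. -/
def omPer (ν : ℝ) (w0 t₀ : ℂ) (t : ℝ) : ℂ :=
  w0 * Complex.exp (-(ν : ℂ) * (t : ℂ)) *
    ((1 - Complex.exp (-(ν : ℂ) * t₀)) / (1 - Complex.exp (-(ν : ℂ) * ((t : ℂ) + t₀)))) ^ 2

/-- `v_c(t) = (ω₋₁(0)/ν)(1 − e^(−ν t₀))(1 − e^(−νt))/(1 − e^(−ν(t + t₀))) + v_c(0)`. -/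
def vcPer (ν : ℝ) (w0 v0 t₀ : ℂ) (t : ℝ) : ℂ :=
  w0 / (ν : ℂ) * (1 - Complex.exp (-(ν : ℂ) * t₀)) * (1 - Complex.exp (-(ν : ℂ) * (t : ℂ))) /
    (1 - Complex.exp (-(ν : ℂ) * ((t : ℂ) + t₀))) + v0

set_option maxHeartbeats 1000000 in
/-- The explicit solution of the pole-dynamics system for the periodic problem with `a = 0`,
`σ = 0`: for `ν > 0`, `ω₋₁(0) ≠ ν(1 + v_c(0))`, and `t₀ ∈ ℂ` with
`e^(ν t₀) = 1 − ν(1 + v_c(0))/ω₋₁(0)`, on any interval `[0, T)` on which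
`1 − e^(−ν(t + t₀)) ≠ 0` and `1 + v_c(t) ≠ 0`, the functions `ω₋₁, v_c` above satisfy
`dω₋₁/dt = −ν ω₋₁ + 2ω₋₁²/(1 + v_c)`, `dv_c/dt = ω₋₁`, with the given initial values. -/
theorem stmt18 (ν : ℝ) (hν : 0 < ν) (w0 v0 t₀ : ℂ)
    (hne : w0 ≠ (ν : ℂ) * (1 + v0))
    (ht₀ : Complex.exp ((ν : ℂ) * t₀) = 1 - (ν : ℂ) * (1 + v0) / w0)
    (T : ℝ) (hT : 0 < T)
    (hden : ∀ t ∈ Set.Ico (0 : ℝ) T, 1 - Complex.exp (-(ν : ℂ) * ((t : ℂ) + t₀)) ≠ 0)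
    (hV : ∀ t ∈ Set.Ico (0 : ℝ) T, 1 + vcPer ν w0 v0 t₀ t ≠ 0) :
    omPer ν w0 t₀ 0 = w0 ∧
    vcPer ν w0 v0 t₀ 0 = v0 ∧
    ∀ t ∈ Set.Ico (0 : ℝ) T,
      HasDerivWithinAt (omPer ν w0 t₀)
        (-(ν : ℂ) * omPer ν w0 t₀ t +
          2 * omPer ν w0 t₀ t ^ 2 / (1 + vcPer ν w0 v0 t₀ t)) (Set.Ico (0 : ℝ) T) t ∧
      HasDerivWithinAt (vcPer ν w0 v0 t₀) (omPer ν w0 t₀ t) (Set.Ico (0 : ℝ) T) t := by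
  have hν' : (ν:ℂ) ≠ 0 := by exact_mod_cast hν.ne'
  have h0T : (0:ℝ) ∈ Set.Ico (0:ℝ) T := ⟨le_refl _, hT⟩
  have hE₀ : (1 : ℂ) - Complex.exp (-(ν:ℂ)*t₀) ≠ 0 := by
    have := hden 0 h0T; simpa using this
  have hE₀ne : Complex.exp (-(ν:ℂ)*t₀) ≠ 0 := Complex.exp_ne_zero _
  have hEE : Complex.exp ((ν:ℂ)*t₀) * Complex.exp (-(ν:ℂ)*t₀) = 1 := by
    rw [← Complex.exp_add]; simp
  have hw0 : w0 ≠ 0 := by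
    intro h
    apply hE₀
    have h1 : Complex.exp ((ν:ℂ)*t₀) = 1 := by rw [ht₀, h]; simp
    rw [h1, one_mul] at hEE
    rw [hEE]; ring
  have hkey : (ν:ℂ) * (1 + v0) * Complex.exp (-(ν:ℂ)*t₀)
      = w0 * (Complex.exp (-(ν:ℂ)*t₀) - 1) := by
    have ht₀' : Complex.exp ((ν:ℂ)*t₀) * w0 = w0 - (ν:ℂ)*(1+v0) := by
      rw [ht₀]; field_simp
    linear_combination (Complex.exp (-(ν:ℂ)*t₀)) * ht₀' - w0 * hEE
  have hsplit : ∀ t : ℝ, Complex.exp (-(ν:ℂ) * ((t:ℂ) + t₀))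
      = Complex.exp (-(ν:ℂ) * (t:ℂ)) * Complex.exp (-(ν:ℂ) * t₀) := by
    intro t
    rw [← Complex.exp_add]; ring_nf
  -- initial values
  have hom0 : omPer ν w0 t₀ 0 = w0 := by
    unfold omPer
    push_cast
    rw [mul_zero, Complex.exp_zero, zero_add, div_self hE₀]
    simp
  have hvc0 : vcPer ν w0 v0 t₀ 0 = v0 := by
    unfold vcPer
    push_cast
    rw [mul_zero, Complex.exp_zero, zero_add]
    simp
  refine ⟨hom0, hvc0, fun t htmem => ?_⟩
  have hD : 1 - Complex.exp (-(ν:ℂ) * ((t:ℂ) + t₀)) ≠ 0 := hden t htmem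
  have hD' : 1 - Complex.exp (-(ν:ℂ) * (t:ℂ)) * Complex.exp (-(ν:ℂ) * t₀) ≠ 0 := by
    rw [← hsplit]; exact hD
  have hEne : Complex.exp (-(ν:ℂ) * (t:ℂ)) ≠ 0 := Complex.exp_ne_zero _
  have h1V := hV t htmem
  -- derivative building blocks
  have hEt : HasDerivAt (fun s : ℝ => Complex.exp (-(ν:ℂ) * (s:ℂ)))
      (Complex.exp (-(ν:ℂ) * (t:ℂ)) * (-(ν:ℂ))) t := by
    have := (Complex.ofRealCLM.hasDerivAt (x := t)).const_mul (-(ν:ℂ))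
    simpa using this.cexp
  have hPt : HasDerivAt (fun s : ℝ => Complex.exp (-(ν:ℂ) * ((s:ℂ) + t₀)))
      (Complex.exp (-(ν:ℂ) * ((t:ℂ) + t₀)) * (-(ν:ℂ))) t := by
    have := ((Complex.ofRealCLM.hasDerivAt (x := t)).add_const t₀).const_mul (-(ν:ℂ))
    simpa using this.cexp
  have hDt : HasDerivAt (fun s : ℝ => 1 - Complex.exp (-(ν:ℂ) * ((s:ℂ) + t₀)))
      (-(Complex.exp (-(ν:ℂ) * ((t:ℂ) + t₀)) * (-(ν:ℂ)))) t := hPt.const_sub 1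
  -- 1 + vc in closed form
  have hvc : 1 + vcPer ν w0 v0 t₀ t
      = -(w0 * (1 - Complex.exp (-(ν:ℂ)*t₀))^2) /
        ((ν:ℂ) * Complex.exp (-(ν:ℂ)*t₀) * (1 - Complex.exp (-(ν:ℂ) * ((t:ℂ) + t₀)))) := by
    have hv0 : v0 = w0 * (Complex.exp (-(ν:ℂ)*t₀) - 1) / ((ν:ℂ) * Complex.exp (-(ν:ℂ)*t₀)) - 1 := by
      set E₀ := Complex.exp (-(ν:ℂ)*t₀) with hE₀def
      field_simp
      linear_combination hkey
    unfold vcPer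
    rw [hv0, hsplit t]
    set E := Complex.exp (-(ν:ℂ) * (t:ℂ)) with hEdef
    set E₀ := Complex.exp (-(ν:ℂ)*t₀) with hE₀def
    have hD'' : 1 - E₀ * E ≠ 0 := by rw [mul_comm]; exact hD'
    field_simp
    ring
  constructor
  · -- omPer derivative
    have hq : HasDerivAt (fun s : ℝ =>
        (1 - Complex.exp (-(ν:ℂ)*t₀)) / (1 - Complex.exp (-(ν:ℂ) * ((s:ℂ) + t₀)))) _ t :=
      (hasDerivAt_const t (1 - Complex.exp (-(ν:ℂ)*t₀))).div hDt hD
    have hom := (hEt.const_mul w0).mul (hq.mul hq)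
    have hfun : omPer ν w0 t₀ = fun s : ℝ =>
        w0 * Complex.exp (-(ν:ℂ) * (s:ℂ)) *
          ((1 - Complex.exp (-(ν:ℂ)*t₀)) / (1 - Complex.exp (-(ν:ℂ) * ((s:ℂ) + t₀))) *
           ((1 - Complex.exp (-(ν:ℂ)*t₀)) / (1 - Complex.exp (-(ν:ℂ) * ((s:ℂ) + t₀))))) := by
      funext s
      unfold omPer
      ring
    rw [hfun]
    refine (hom.congr_deriv ?_).hasDerivWithinAt
    rw [hvc]
    simp only [Pi.mul_apply]
    beta_reduce
    rw [hsplit t]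
    set E := Complex.exp (-(ν:ℂ) * (t:ℂ)) with hEdef
    set E₀ := Complex.exp (-(ν:ℂ)*t₀) with hE₀def
    have h2 : (1 - E*E₀)^2 ≠ 0 := pow_ne_zero _ hD'
    have h3 : (1 - E₀)^2 ≠ 0 := pow_ne_zero _ hE₀
    field_simp
    ring
  · -- vcPer derivative
    have hnum := (hEt.const_sub 1).const_mul (w0 / (ν:ℂ) * (1 - Complex.exp (-(ν:ℂ)*t₀)))
    have hvcd := (hnum.div hDt hD).add_const v0
    have hvct : HasDerivAt (vcPer ν w0 v0 t₀) _ t := hvcd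
    refine (hvct.congr_deriv ?_).hasDerivWithinAt
    unfold omPer
    rw [hsplit t]
    set E := Complex.exp (-(ν:ℂ) * (t:ℂ)) with hEdef
    set E₀ := Complex.exp (-(ν:ℂ)*t₀) with hE₀def
    have h2 : (1 - E*E₀)^2 ≠ 0 := pow_ne_zero _ hD'
    have h3 : (1 - E₀)^2 ≠ 0 := pow_ne_zero _ hE₀
    field_simp
    ring

end
end

section
/- Let ν > 0 and let ω₋₁(0) and v_c(0) be real with v_c(0) > 0. Define v_c(t) = [ω₋₁(0)(1 − e^(−νt)) + ν v_c(0)(1 + v_c(0))] / [−ω₋₁(0)(1 − e^(−νt)) + ν(1 + v_c(0))]. Then: (a) if −ν v_c(0)(1 + v_c(0)) < ω₋₁(0) < ν(1 + v_c(0)), then 0 < v_c(t) < ∞ for all t ≥ 0; (c1) if ω₋₁(0) < −ν v_c(0)(1 + v_c(0)), then setting t_c = (1/ν) ln(ω₋₁(0)/(ω₋₁(0) + ν v_c(0)(1 + v_c(0)))) we have t_c > 0, v_c(t) > 0 for 0 ≤ t < t_c, and v_c(t_c) = 0; (c2) if ω₋₁(0) > ν(1 + v_c(0)), then setting t_c =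 (1/ν) ln(ω₋₁(0)/(ω₋₁(0) − ν(1 + v_c(0)))) we have t_c > 0, v_c(t) is finite and positive for 0 ≤ t < t_c, and v_c(t) → +∞ as t → t_c⁻ (the denominator −ω₋₁(0)(1 − e^(−νt)) + ν(1 + v_c(0)) vanishes at t = t_c). -/
noncomputable section

/-- The denominator `−ω₋₁(0)(1 − e^(−νt)) + ν(1 + v_c(0))`. -/
def vcDen (ν w0 v0 t : ℝ) : ℝ := -(w0 * (1 - Real.exp (-(ν * t)))) + ν * (1 + v0)

/-- The pole height
`v_c(t) = [ω₋₁(0)(1 − e^(−νt)) + ν v_c(0)(1 + v_c(0))]/[−ω₋₁(0)(1 − e^(−νt)) + ν(1 + v_c(0))]`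
for the periodic pole-dynamics solution with `a = 0`, `σ = 0`. -/
def vcHeight (ν w0 v0 t : ℝ) : ℝ :=
  (w0 * (1 - Real.exp (-(ν * t))) + ν * v0 * (1 + v0)) / vcDen ν w0 v0 t

/-- Behavior of the pole height `v_c(t)` for `ν > 0`, real data `ω₋₁(0)` and `v_c(0) > 0`:
(a) if `−ν v_c(0)(1 + v_c(0)) < ω₋₁(0) < ν(1 + v_c(0))`, then `v_c(t)` is finite and positive
for all `t ≥ 0`; (c1) if `ω₋₁(0) < −ν v_c(0)(1 + v_c(0))`, then with
`t_c = (1/ν) ln(ω₋₁(0)/(ω₋₁(0) + ν v_c(0)(1 + v_c(0))))` one has `t_c > 0`, `v_c > 0` on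
`[0, t_c)`, and `v_c(t_c) = 0`; (c2) if `ω₋₁(0) > ν(1 + v_c(0))`, then with
`t_c = (1/ν) ln(ω₋₁(0)/(ω₋₁(0) − ν(1 + v_c(0))))` one has `t_c > 0`, `v_c` finite and
positive on `[0, t_c)`, `v_c(t) → +∞` as `t → t_c⁻`, and the denominator vanishes at `t_c`. -/
theorem stmt19 (ν w0 v0 : ℝ) (hν : 0 < ν) (hv0 : 0 < v0) :
    (-(ν * v0 * (1 + v0)) < w0 → w0 < ν * (1 + v0) →
      ∀ t : ℝ, 0 ≤ t → 0 < vcHeight ν w0 v0 t ∧ vcDen ν w0 v0 t ≠ 0) ∧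
    (w0 < -(ν * v0 * (1 + v0)) →
      0 < (1 / ν) * Real.log (w0 / (w0 + ν * v0 * (1 + v0))) ∧
      (∀ t : ℝ, 0 ≤ t → t < (1 / ν) * Real.log (w0 / (w0 + ν * v0 * (1 + v0))) →
        0 < vcHeight ν w0 v0 t) ∧
      vcHeight ν w0 v0 ((1 / ν) * Real.log (w0 / (w0 + ν * v0 * (1 + v0)))) = 0) ∧
    (ν * (1 + v0) < w0 →
      0 < (1 / ν) * Real.log (w0 / (w0 - ν * (1 + v0))) ∧
      (∀ t : ℝ, 0 ≤ t → t < (1 / ν) * Real.log (w0 / (w0 - ν * (1 + v0))) →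
        0 < vcHeight ν w0 v0 t ∧ vcDen ν w0 v0 t ≠ 0) ∧
      Filter.Tendsto (vcHeight ν w0 v0)
        (nhdsWithin ((1 / ν) * Real.log (w0 / (w0 - ν * (1 + v0))))
          (Set.Iio ((1 / ν) * Real.log (w0 / (w0 - ν * (1 + v0))))))
        Filter.atTop ∧
      vcDen ν w0 v0 ((1 / ν) * Real.log (w0 / (w0 - ν * (1 + v0)))) = 0) := by
  have hν' : ν ≠ 0 := ne_of_gt hν
  have hcpos : 0 < ν * v0 * (1 + v0) := by positivity
  have hdpos : 0 < ν * (1 + v0) := by positivity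
  refine ⟨?_, ?_, ?_⟩
  · -- case (a)
    intro h1 h2 t ht
    have hP0 : 0 < Real.exp (-(ν * t)) := Real.exp_pos _
    have hP1 : Real.exp (-(ν * t)) ≤ 1 := (by rw [← Real.exp_zero]; exact Real.exp_le_exp.mpr (by nlinarith))
    have hD : 0 < vcDen ν w0 v0 t := by
      unfold vcDen
      nlinarith [mul_nonneg (sub_nonneg.2 h2.le) (sub_nonneg.2 hP1),
        mul_pos hdpos hP0]
    have hN : 0 < w0 * (1 - Real.exp (-(ν * t))) + ν * v0 * (1 + v0) := by
      nlinarith [mul_nonneg (by linarith : (0:ℝ) ≤ w0 + ν * v0 * (1 + v0))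
        (sub_nonneg.2 hP1), mul_pos hcpos hP0]
    exact ⟨div_pos hN hD, hD.ne'⟩
  · -- case (c1)
    intro h1
    have hw0neg : w0 < 0 := by linarith
    have hwc : w0 + ν * v0 * (1 + v0) < 0 := by linarith
    have hr1 : 1 < w0 / (w0 + ν * v0 * (1 + v0)) := by
      rw [lt_div_iff_of_neg hwc]; linarith
    have hlog : 0 < Real.log (w0 / (w0 + ν * v0 * (1 + v0))) := Real.log_pos hr1
    have htcpos : 0 < (1 / ν) * Real.log (w0 / (w0 + ν * v0 * (1 + v0))) := by positivity
    set tc := (1 / ν) * Real.log (w0 / (w0 + ν * v0 * (1 + v0))) with htc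
    have hexp : Real.exp (-(ν * tc)) = (w0 + ν * v0 * (1 + v0)) / w0 := by
      have hmul : ν * tc = Real.log (w0 / (w0 + ν * v0 * (1 + v0))) := by
        rw [htc]; field_simp
      rw [hmul, Real.exp_neg, Real.exp_log (by linarith), inv_div]
    refine ⟨htcpos, ?_, ?_⟩
    · intro t ht htlt
      have hP1 : Real.exp (-(ν * t)) ≤ 1 := (by rw [← Real.exp_zero]; exact Real.exp_le_exp.mpr (by nlinarith))
      have hPgt : (w0 + ν * v0 * (1 + v0)) / w0 < Real.exp (-(ν * t)) := by
        rw [← hexp]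
        exact Real.exp_lt_exp.mpr (by nlinarith)
      have hwP : Real.exp (-(ν * t)) * w0 < w0 + ν * v0 * (1 + v0) := by
        rwa [div_lt_iff_of_neg hw0neg] at hPgt
      have hN : 0 < w0 * (1 - Real.exp (-(ν * t))) + ν * v0 * (1 + v0) := by nlinarith
      have hD : 0 < vcDen ν w0 v0 t := by
        unfold vcDen
        nlinarith [mul_nonneg (by linarith : (0:ℝ) ≤ -w0) (sub_nonneg.2 hP1)]
      exact div_pos hN hD
    · have hnum : w0 * (1 - Real.exp (-(ν * tc))) + ν * v0 * (1 + v0) = 0 := by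
        rw [hexp]
        rw [mul_sub, mul_one, ← mul_div_assoc, mul_div_cancel_left₀ _ hw0neg.ne]
        ring
      unfold vcHeight
      rw [hnum, zero_div]
  · -- case (c2)
    intro h1
    have hw0pos : 0 < w0 := by linarith
    have hwd : 0 < w0 - ν * (1 + v0) := by linarith
    have hr1 : 1 < w0 / (w0 - ν * (1 + v0)) := by
      rw [lt_div_iff₀ hwd]; linarith
    have hlog : 0 < Real.log (w0 / (w0 - ν * (1 + v0))) := Real.log_pos hr1
    have htcpos : 0 < (1 / ν) * Real.log (w0 / (w0 - ν * (1 + v0))) := by positivity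
    set tc := (1 / ν) * Real.log (w0 / (w0 - ν * (1 + v0))) with htc
    have hexp : Real.exp (-(ν * tc)) = (w0 - ν * (1 + v0)) / w0 := by
      have hmul : ν * tc = Real.log (w0 / (w0 - ν * (1 + v0))) := by
        rw [htc]; field_simp
      rw [hmul, Real.exp_neg, Real.exp_log (div_pos hw0pos hwd), inv_div]
    have hDtc : vcDen ν w0 v0 tc = 0 := by
      unfold vcDen
      rw [hexp]; field_simp; ring
    have hDpos : ∀ t : ℝ, t < tc → 0 < vcDen ν w0 v0 t := by
      intro t htlt
      have hPgt : (w0 - ν * (1 + v0)) / w0 < Real.exp (-(ν * t)) := by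
        rw [← hexp]
        exact Real.exp_lt_exp.mpr (by nlinarith)
      have hwP : w0 - ν * (1 + v0) < Real.exp (-(ν * t)) * w0 := by
        rwa [div_lt_iff₀ hw0pos] at hPgt
      unfold vcDen
      nlinarith
    refine ⟨htcpos, ?_, ?_, hDtc⟩
    · intro t ht htlt
      have hP1 : Real.exp (-(ν * t)) ≤ 1 := (by rw [← Real.exp_zero]; exact Real.exp_le_exp.mpr (by nlinarith))
      have hD := hDpos t htlt
      have hN : 0 < w0 * (1 - Real.exp (-(ν * t))) + ν * v0 * (1 + v0) := by
        nlinarith [mul_nonneg hw0pos.le (sub_nonneg.2 hP1)]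
      exact ⟨div_pos hN hD, hD.ne'⟩
    · -- tendsto atTop
      have hcontD : Continuous (vcDen ν w0 v0) := by
        unfold vcDen; fun_prop
      have hcontN : Continuous (fun t : ℝ =>
          w0 * (1 - Real.exp (-(ν * t))) + ν * v0 * (1 + v0)) := by fun_prop
      have hDlim : Filter.Tendsto (vcDen ν w0 v0) (nhdsWithin tc (Set.Iio tc))
          (nhdsWithin 0 (Set.Ioi 0)) := by
        rw [tendsto_nhdsWithin_iff]
        constructor
        · have := (hcontD.tendsto tc).mono_left
            (nhdsWithin_le_nhds (s := Set.Iio tc))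
          rwa [hDtc] at this
        · filter_upwards [self_mem_nhdsWithin] with t ht
          exact hDpos t ht
      have hinv : Filter.Tendsto (fun t => (vcDen ν w0 v0 t)⁻¹)
          (nhdsWithin tc (Set.Iio tc)) Filter.atTop :=
        tendsto_inv_nhdsGT_zero.comp hDlim
      have hNtc : w0 * (1 - Real.exp (-(ν * tc))) + ν * v0 * (1 + v0)
          = ν * (1 + v0) + ν * v0 * (1 + v0) := by
        rw [hexp]; field_simp; ring
      have hNlim : Filter.Tendsto (fun t : ℝ =>
          w0 * (1 - Real.exp (-(ν * t))) + ν * v0 * (1 + v0))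
          (nhdsWithin tc (Set.Iio tc)) (nhds (ν * (1 + v0) + ν * v0 * (1 + v0))) := by
        have := (hcontN.tendsto tc).mono_left
          (nhdsWithin_le_nhds (s := Set.Iio tc))
        rwa [hNtc] at this
      have : Filter.Tendsto (fun t : ℝ =>
          (w0 * (1 - Real.exp (-(ν * t))) + ν * v0 * (1 + v0)) * (vcDen ν w0 v0 t)⁻¹)
          (nhdsWithin tc (Set.Iio tc)) Filter.atTop :=
        Filter.Tendsto.pos_mul_atTop (by positivity) hNlim hinv
      exact Filter.Tendsto.congr (fun t => by rw [vcHeight, div_eq_mul_inv]) this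

end
end
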